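/- arXiv:1908.10491 — 7 statements merged into one kernel-verified Lean document; each statement's English description precedes it below -/
import Mathlib

section
/- Let S be the closed segment in ℝ² from (a,1) to (b,2) and let P be the closed segment from (a',1) to (b',2). Then S ∩ P ≠ ∅ if and only if ( a ≤ a' and b' ≤ b ) or ( a' ≤ a and b ≤ b' ). -/
/-- A segment between the horizontal lines `L₁ = {y = 1}` and `L₂ = {y = 2}`,
given by its two endpoints, each of which lies on `L₁` or `L₂`. -/
structure IPSeg where
  p : ℝ × ℝ
  q : ℝ × ℝ
  hp : p.2 = 1 ∨ p.2 = 2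
  hq : q.2 = 1 ∨ q.2 = 2

namespace IPSeg

/-- The closed line segment in `ℝ²` determined by the two endpoints. -/
def carrier (s : IPSeg) : Set (ℝ × ℝ) := segment ℝ s.p s.q

/-- An interval segment: both endpoints on the same horizontal line. -/
def IsInterval (s : IPSeg) : Prop := s.p.2 = s.q.2

/-- A permutation segment: one endpoint on each horizontal line. -/
def IsPermutation (s : IPSeg) : Prop := s.p.2 ≠ s.q.2

/-- The (set of) endpoints of the segment. -/
def endpoints (s : IPSeg) : Set (ℝ × ℝ) := {s.p, s.q}

end IPSeg

/-- An IP-SEG model of a graph: distinct vertices are adjacent iff their segments meet. -/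
def IsIPSEGModel {V : Type*} (G : SimpleGraph V) (s : V → IPSeg) : Prop :=
  ∀ u v : V, u ≠ v → (G.Adj u v ↔ ((s u).carrier ∩ (s v).carrier).Nonempty)

/-- An IP-SEG* model: an IP-SEG model in which all interval segments lie on one line. -/
def IsIPSEGStarModel {V : Type*} (G : SimpleGraph V) (s : V → IPSeg) : Prop :=
  IsIPSEGModel G s ∧
    ∃ c : ℝ, (c = 1 ∨ c = 2) ∧ ∀ v : V, (s v).IsInterval → (s v).p.2 = c

lemma aux_inter (a b a' b' : ℝ) (h1 : a ≤ a') (h2 : b' ≤ b) :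
    (segment ℝ ((a, 1) : ℝ × ℝ) (b, 2) ∩ segment ℝ ((a', 1) : ℝ × ℝ) (b', 2)).Nonempty := by
  have hd0 : 0 ≤ (a' - a) + (b - b') := by linarith
  rcases hd0.eq_or_lt with h | h
  · have ha : a = a' := by linarith
    exact ⟨(a, 1), left_mem_segment ℝ _ _, ha ▸ left_mem_segment ℝ _ _⟩
  · set d := (a' - a) + (b - b') with hd
    set t := (a' - a) / d with ht
    have ht0 : 0 ≤ t := div_nonneg (by linarith) h.le
    have ht1 : t ≤ 1 := by rw [ht, div_le_one h]; linarith
    have hdne : d ≠ 0 := h.ne'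
    have key : (1 - t) * a + t * b = (1 - t) * a' + t * b' := by
      rw [ht]
      field_simp
      rw [hd]
      ring
    refine ⟨((1 - t) * a + t * b, (1 - t) * 1 + t * 2), ?_, ?_⟩
    · rw [segment_eq_image]
      exact ⟨t, ⟨ht0, ht1⟩, by simp [Prod.smul_mk, Prod.mk_add_mk, smul_eq_mul]⟩
    · rw [segment_eq_image]
      refine ⟨t, ⟨ht0, ht1⟩, ?_⟩
      simp [Prod.smul_mk, Prod.mk_add_mk, smul_eq_mul, key]

/-- Two permutation segments, from `(a,1)` to `(b,2)` and from `(a',1)` to `(b',2)`,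
intersect iff one of them "dominates" the other on both lines, i.e. iff
`(a ≤ a' ∧ b' ≤ b) ∨ (a' ≤ a ∧ b ≤ b')`. -/
theorem permutation_permutation_intersect (a b a' b' : ℝ) :
    (segment ℝ ((a, 1) : ℝ × ℝ) (b, 2) ∩ segment ℝ ((a', 1) : ℝ × ℝ) (b', 2)).Nonempty ↔
      (a ≤ a' ∧ b' ≤ b) ∨ (a' ≤ a ∧ b ≤ b') := by
  constructor
  · rintro ⟨x, hx1, hx2⟩
    rw [segment_eq_image] at hx1 hx2
    obtain ⟨t, ⟨ht0, ht1⟩, hxt⟩ := hx1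
    obtain ⟨s, ⟨hs0, hs1⟩, hxs⟩ := hx2
    have heq := hxt.trans hxs.symm
    have h2 := congrArg Prod.snd heq
    simp [Prod.smul_mk, Prod.mk_add_mk, smul_eq_mul] at h2
    have hts : t = s := by linarith
    subst hts
    have h1 := congrArg Prod.fst heq
    simp [Prod.smul_mk, Prod.mk_add_mk, smul_eq_mul] at h1
    by_contra hc
    push_neg at hc
    obtain ⟨hc1, hc2⟩ := hc
    rcases le_or_gt a a' with hA | hA
    · have hB := hc1 hA
      rcases ht0.eq_or_lt with h0 | h0
      · have : a = a' := by nlinarith [h1]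
        have := hc2 this.ge
        linarith
      · nlinarith [h1, mul_pos h0 (show (0:ℝ) < b' - b by linarith),
          mul_nonneg (sub_nonneg.2 ht1) (sub_nonneg.2 hA)]
    · have hB := hc2 hA.le
      rcases ht0.eq_or_lt with h0 | h0
      · have : a = a' := by nlinarith [h1]
        linarith
      · nlinarith [h1, mul_pos h0 (show (0:ℝ) < b - b' by linarith),
          mul_nonneg (sub_nonneg.2 ht1) (sub_nonneg.2 hA.le)]
  · rintro (⟨h1, h2⟩ | ⟨h1, h2⟩)
    · exact aux_inter a b a' b' h1 h2
    · rw [Set.inter_comm]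
      exact aux_inter a' b' a b h1 h2
end

section
/- Every IP-SEG graph G on n vertices admits an IP-SEG model in which the x-coordinate of every segment endpoint belongs to {1, 2, …, 2n} and no two segments assigned to distinct vertices share an endpoint. Moreover, if G admits an IP-SEG* model then it admits such a model that is additionally an IP-SEG* model. -/
/-- A "nice" model: every endpoint has `x`-coordinate an integer in `{1, …, 2n}`
(where `n` is the number of vertices), and segments of distinct vertices share
no endpoint. -/
def NiceModel {V : Type} [Fintype V] (s : V → IPSeg) : Prop :=
  (∀ v : V, ∀ e ∈ (s v).endpoints,
      ∃ k : ℕ, 1 ≤ k ∧ k ≤ 2 * Fintype.card V ∧ e.1 = (k : ℝ)) ∧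
  (∀ u v : V, u ≠ v → ∀ e ∈ (s u).endpoints, e ∉ (s v).endpoints)

namespace IPSeg

def line (s : IPSeg) : ℝ := s.p.2
noncomputable def lo (s : IPSeg) : ℝ := min s.p.1 s.q.1
noncomputable def hi (s : IPSeg) : ℝ := max s.p.1 s.q.1
noncomputable def bot (s : IPSeg) : ℝ := if s.p.2 = 1 then s.p.1 else s.q.1
noncomputable def top (s : IPSeg) : ℝ := if s.p.2 = 1 then s.q.1 else s.p.1

lemma mem_segment_iff {E : Type*} [AddCommGroup E] [Module ℝ E] {p q z : E} :
    z ∈ segment ℝ p q ↔ ∃ θ : ℝ, 0 ≤ θ ∧ θ ≤ 1 ∧ z = (1 - θ) • p + θ • q := by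
  rw [segment_eq_image]
  constructor
  · rintro ⟨θ, hθ, rfl⟩; exact ⟨θ, hθ.1, hθ.2, rfl⟩
  · rintro ⟨θ, h0, h1, rfl⟩; exact ⟨θ, ⟨h0, h1⟩, rfl⟩

lemma mem_int {s : IPSeg} (h : s.IsInterval) {z : ℝ × ℝ} :
    z ∈ s.carrier ↔ z.2 = s.line ∧ s.lo ≤ z.1 ∧ z.1 ≤ s.hi := by
  rw [carrier, mem_segment_iff]
  constructor
  · rintro ⟨θ, h0, h1, rfl⟩
    refine ⟨?_, ?_, ?_⟩
    · show (1-θ) * s.p.2 + θ * s.q.2 = s.line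
      rw [line, ← h]; ring
    · show s.lo ≤ (1-θ) * s.p.1 + θ * s.q.1
      have h1' : s.lo ≤ s.p.1 := min_le_left _ _
      have h2' : s.lo ≤ s.q.1 := min_le_right _ _
      nlinarith
    · show (1-θ) * s.p.1 + θ * s.q.1 ≤ s.hi
      have h1' : s.p.1 ≤ s.hi := le_max_left _ _
      have h2' : s.q.1 ≤ s.hi := le_max_right _ _
      nlinarith
  · rintro ⟨hz2, hzlo, hzhi⟩
    have : z.1 ∈ segment ℝ s.p.1 s.q.1 := by
      rw [segment_eq_uIcc, Set.uIcc, Set.mem_Icc]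
      exact ⟨hzlo, hzhi⟩
    rw [mem_segment_iff] at this
    obtain ⟨θ, h0, h1, hx⟩ := this
    refine ⟨θ, h0, h1, ?_⟩
    have : z = (z.1, z.2) := rfl
    rw [this, hx, hz2]
    show ((1-θ) * s.p.1 + θ * s.q.1, s.line) = _
    have : (1-θ) • s.p + θ • s.q = ((1-θ) * s.p.1 + θ * s.q.1, (1-θ)*s.p.2 + θ*s.q.2) := rfl
    rw [this]
    have : (1-θ)*s.p.2 + θ*s.q.2 = s.line := by rw [line, ← h]; ring
    rw [this]

lemma perm_bot_top {s : IPSeg} (h : s.IsPermutation) :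
    (s.bot = s.p.1 ∧ s.top = s.q.1 ∧ s.p.2 = 1 ∧ s.q.2 = 2) ∨
    (s.bot = s.q.1 ∧ s.top = s.p.1 ∧ s.p.2 = 2 ∧ s.q.2 = 1) := by
  rcases s.hp with h1 | h1
  · left
    have hq2 : s.q.2 = 2 := by
      rcases s.hq with h2 | h2
      · exact absurd (h1.trans h2.symm) h
      · exact h2
    exact ⟨by rw [bot, if_pos h1], by rw [top, if_pos h1], h1, hq2⟩
  · right
    have hq2 : s.q.2 = 1 := by
      rcases s.hq with h2 | h2
      · exact h2
      · exact absurd (h1.trans h2.symm) h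
    have hne : ¬ s.p.2 = 1 := by rw [h1]; norm_num
    exact ⟨by rw [bot, if_neg hne], by rw [top, if_neg hne], h1, hq2⟩

lemma mem_perm {s : IPSeg} (h : s.IsPermutation) {z : ℝ × ℝ} :
    z ∈ s.carrier ↔ ∃ θ : ℝ, 0 ≤ θ ∧ θ ≤ 1 ∧ z = ((1 - θ) * s.bot + θ * s.top, 1 + θ) := by
  rcases perm_bot_top h with ⟨hb, ht, hp1, hq2⟩ | ⟨hb, ht, hp2, hq1⟩
  · rw [carrier, mem_segment_iff]
    constructor
    · rintro ⟨θ, h0, h1, rfl⟩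
      refine ⟨θ, h0, h1, ?_⟩
      have : (1-θ) • s.p + θ • s.q = ((1-θ) * s.p.1 + θ * s.q.1, (1-θ)*s.p.2 + θ*s.q.2) := rfl
      rw [this, hb, ht, hp1, hq2]
      norm_num; ring
    · rintro ⟨θ, h0, h1, rfl⟩
      refine ⟨θ, h0, h1, ?_⟩
      have : (1-θ) • s.p + θ • s.q = ((1-θ) * s.p.1 + θ * s.q.1, (1-θ)*s.p.2 + θ*s.q.2) := rfl
      rw [this, hb, ht, hp1, hq2]
      norm_num; ring
  · rw [carrier, segment_symm, mem_segment_iff]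
    constructor
    · rintro ⟨θ, h0, h1, rfl⟩
      refine ⟨θ, h0, h1, ?_⟩
      have : (1-θ) • s.q + θ • s.p = ((1-θ) * s.q.1 + θ * s.p.1, (1-θ)*s.q.2 + θ*s.p.2) := rfl
      rw [this, hb, ht, hp2, hq1]
      norm_num; ring
    · rintro ⟨θ, h0, h1, rfl⟩
      refine ⟨θ, h0, h1, ?_⟩
      have : (1-θ) • s.q + θ • s.p = ((1-θ) * s.q.1 + θ * s.p.1, (1-θ)*s.q.2 + θ*s.p.2) := rfl
      rw [this, hb, ht, hp2, hq1]
      norm_num; ring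


lemma line_mem {s : IPSeg} : s.line = 1 ∨ s.line = 2 := s.hp

lemma lo_le_hi (s : IPSeg) : s.lo ≤ s.hi := min_le_max

lemma meets_int_int {s t : IPSeg} (hs : s.IsInterval) (ht : t.IsInterval) :
    (s.carrier ∩ t.carrier).Nonempty ↔ s.line = t.line ∧ s.lo ≤ t.hi ∧ t.lo ≤ s.hi := by
  constructor
  · rintro ⟨z, hzs, hzt⟩
    rw [mem_int hs] at hzs
    rw [mem_int ht] at hzt
    exact ⟨hzs.1.symm.trans hzt.1, hzs.2.1.trans hzt.2.2, hzt.2.1.trans hzs.2.2⟩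
  · rintro ⟨hl, h1, h2⟩
    refine ⟨(max s.lo t.lo, s.line), ?_, ?_⟩
    · rw [mem_int hs]
      exact ⟨rfl, le_max_left _ _, max_le s.lo_le_hi h2⟩
    · rw [mem_int ht]
      exact ⟨hl, le_max_right _ _, max_le h1 t.lo_le_hi⟩

lemma meets_int_perm {s t : IPSeg} (hs : s.IsInterval) (ht : t.IsPermutation) :
    (s.carrier ∩ t.carrier).Nonempty ↔
      s.lo ≤ (if s.line = 1 then t.bot else t.top) ∧ (if s.line = 1 then t.bot else t.top) ≤ s.hi := by
  rcases s.line_mem with hl | hl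
  · rw [if_pos hl]
    constructor
    · rintro ⟨z, hzs, hzt⟩
      rw [mem_int hs] at hzs
      rw [mem_perm ht] at hzt
      obtain ⟨θ, h0, h1, rfl⟩ := hzt
      have : (1 : ℝ) + θ = 1 := by
        have := hzs.1; simpa [hl] using this
      have hθ : θ = 0 := by linarith
      subst hθ
      norm_num at hzs
      exact ⟨hzs.2.1, hzs.2.2⟩
    · rintro ⟨h1, h2⟩
      refine ⟨(t.bot, 1), ?_, ?_⟩
      · rw [mem_int hs]; exact ⟨hl.symm, h1, h2⟩
      · rw [mem_perm ht]; exact ⟨0, le_refl _, zero_le_one, by norm_num⟩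
  · have hne : ¬ s.line = 1 := by rw [hl]; norm_num
    rw [if_neg hne]
    constructor
    · rintro ⟨z, hzs, hzt⟩
      rw [mem_int hs] at hzs
      rw [mem_perm ht] at hzt
      obtain ⟨θ, h0, h1, rfl⟩ := hzt
      have : (1 : ℝ) + θ = 2 := by
        have := hzs.1; simpa [hl] using this
      have hθ : θ = 1 := by linarith
      subst hθ
      norm_num at hzs
      exact ⟨hzs.2.1, hzs.2.2⟩
    · rintro ⟨h1, h2⟩
      refine ⟨(t.top, 2), ?_, ?_⟩
      · rw [mem_int hs]; exact ⟨hl.symm, h1, h2⟩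
      · rw [mem_perm ht]; exact ⟨1, zero_le_one, le_refl _, by norm_num⟩

lemma meets_perm_perm {s t : IPSeg} (hs : s.IsPermutation) (ht : t.IsPermutation) :
    (s.carrier ∩ t.carrier).Nonempty ↔ (s.bot - t.bot) * (s.top - t.top) ≤ 0 := by
  constructor
  · rintro ⟨z, hzs, hzt⟩
    rw [mem_perm hs] at hzs
    rw [mem_perm ht] at hzt
    obtain ⟨θ, h0, h1, rfl⟩ := hzs
    obtain ⟨θ', h0', h1', hz⟩ := hzt
    have hθθ : θ = θ' := by
      have := congrArg Prod.snd hz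
      simp only at this
      linarith
    subst hθθ
    have hx : (1 - θ) * s.bot + θ * s.top = (1 - θ) * t.bot + θ * t.top := by
      have := congrArg Prod.fst hz
      simpa using this
    have hkey0 : (1 - θ) * (s.bot - t.bot) + θ * (s.top - t.top) = 0 := by linarith
    have h2 : θ * ((s.bot - t.bot) * (s.top - t.top)) + (1 - θ) * (s.bot - t.bot) ^ 2
        = (s.bot - t.bot) * ((1 - θ) * (s.bot - t.bot) + θ * (s.top - t.top)) := by ring
    have h3 : (1 - θ) * ((s.bot - t.bot) * (s.top - t.top)) + θ * (s.top - t.top) ^ 2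
        = (s.top - t.top) * ((1 - θ) * (s.bot - t.bot) + θ * (s.top - t.top)) := by ring
    rw [hkey0, mul_zero] at h2 h3
    nlinarith [mul_nonneg (by linarith : (0:ℝ) ≤ 1 - θ) (sq_nonneg (s.bot - t.bot)),
      mul_nonneg h0 (sq_nonneg (s.top - t.top))]
  · intro hprod
    set d := s.bot - t.bot with hd
    set e := s.top - t.top with he
    rcases eq_or_ne d 0 with hd0 | hd0
    · refine ⟨(s.bot, 1), ?_, ?_⟩
      · rw [mem_perm hs]; exact ⟨0, le_refl _, zero_le_one, by norm_num⟩
      · rw [mem_perm ht]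
        refine ⟨0, le_refl _, zero_le_one, ?_⟩
        have : s.bot = t.bot := by rw [hd] at hd0; linarith
        rw [this]; norm_num
    · rcases eq_or_ne e 0 with he0 | he0
      · refine ⟨(s.top, 2), ?_, ?_⟩
        · rw [mem_perm hs]; exact ⟨1, zero_le_one, le_refl _, by norm_num⟩
        · rw [mem_perm ht]
          refine ⟨1, zero_le_one, le_refl _, ?_⟩
          have : s.top = t.top := by rw [he] at he0; linarith
          rw [this]; norm_num
      · have hde : d * e < 0 := lt_of_le_of_ne hprod (by
          intro hcon
          rcases mul_eq_zero.mp hcon with h | h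
          · exact hd0 h
          · exact he0 h)
        have hsub : d - e ≠ 0 := by
          intro hcon
          have : d = e := by linarith
          rw [this] at hde
          nlinarith
        set θ := d / (d - e) with hθdef
        have hrw : θ = -d / (e - d) := by
          rw [hθdef, ← neg_div_neg_eq]
          congr 1 <;> ring
        have h01 : 0 ≤ θ ∧ θ ≤ 1 := by
          rcases lt_or_gt_of_ne hd0 with h | h
          · have he' : 0 < e := by nlinarith
            have hden : 0 < e - d := by linarith
            rw [hrw]
            exact ⟨div_nonneg (by linarith) hden.le, (div_le_one hden).2 (by linarith)⟩
          · have he' : e < 0 := by nlinarith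
            have hden : 0 < d - e := by linarith
            rw [hθdef]
            exact ⟨div_nonneg h.le hden.le, (div_le_one hden).2 (by linarith)⟩
        obtain ⟨h0, h1⟩ := h01
        have hkey : (1 - θ) * d + θ * e = 0 := by
          rw [hθdef]
          field_simp
          ring
        refine ⟨((1 - θ) * s.bot + θ * s.top, 1 + θ), ?_, ?_⟩
        · rw [mem_perm hs]; exact ⟨θ, h0, h1, rfl⟩
        · rw [mem_perm ht]
          refine ⟨θ, h0, h1, ?_⟩
          have : (1 - θ) * s.bot + θ * s.top = (1 - θ) * t.bot + θ * t.top := by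
            rw [hd, he] at hkey; linarith [hkey]
          rw [this]

end IPSeg

open scoped Classical

abbrev KK := ℝ ×ₗ (ℕ ×ₗ (ℝ ×ₗ ℤ))

variable {V : Type} [Fintype V]

noncomputable def ix (v : V) : ℤ := ((Fintype.equivFin V v : Fin (Fintype.card V)) : ℕ)

lemma ix_inj : Function.Injective (ix (V := V)) := by
  intro u v h
  have h' : ((Fintype.equivFin V u : Fin (Fintype.card V)) : ℕ)
      = ((Fintype.equivFin V v : Fin (Fintype.card V)) : ℕ) := by
    unfold ix at h; exact_mod_cast h
  exact (Fintype.equivFin V).injective (Fin.val_injective h')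

lemma ix_nonneg (v : V) : 0 ≤ ix v := Int.ofNat_nonneg _

def mkK (x : ℝ) (m : ℕ) (r : ℝ) (z : ℤ) : KK := toLex (x, toLex (m, toLex (r, z)))

lemma mkK_lt_mkK {x x' r r' : ℝ} {m m' : ℕ} {z z' : ℤ} :
    mkK x m r z < mkK x' m' r' z' ↔
      x < x' ∨ (x = x' ∧ (m < m' ∨ (m = m' ∧ (r < r' ∨ (r = r' ∧ z < z'))))) := by
  simp only [mkK, Prod.Lex.lt_iff, ofLex_toLex]

lemma mkK_le_mkK {x x' r r' : ℝ} {m m' : ℕ} {z z' : ℤ} :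
    mkK x m r z ≤ mkK x' m' r' z' ↔
      x < x' ∨ (x = x' ∧ (m < m' ∨ (m = m' ∧ (r < r' ∨ (r = r' ∧ z ≤ z'))))) := by
  simp only [mkK, Prod.Lex.le_iff, Prod.Lex.lt_iff, ofLex_toLex]

lemma mkK_inj {x x' r r' : ℝ} {m m' : ℕ} {z z' : ℤ} :
    mkK x m r z = mkK x' m' r' z' ↔ x = x' ∧ m = m' ∧ r = r' ∧ z = z' := by
  simp only [mkK, toLex_inj, Prod.mk.injEq]

lemma mkK_le_of_zone_lt {x x' r r' : ℝ} {m m' : ℕ} {z z' : ℤ} (h : m < m') :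
    mkK x m r z ≤ mkK x' m' r' z' ↔ x ≤ x' := by
  rw [mkK_le_mkK]
  constructor
  · rintro (h1 | ⟨h1, _⟩)
    · exact h1.le
    · exact h1.le
  · intro h1
    rcases h1.lt_or_eq with h2 | h2
    · exact Or.inl h2
    · exact Or.inr ⟨h2, Or.inl h⟩

open IPSeg in
noncomputable def key (s : V → IPSeg) (v : V) (i : Bool) : KK :=
  if (s v).IsInterval then
    if i then mkK (s v).hi 2 0 (ix v) else mkK (s v).lo 0 0 (ix v)
  else
    if i then mkK (s v).top 1 (-(s v).bot) (ix v)
    else mkK (s v).bot 1 (-(s v).top) (-(ix v) - 1)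

noncomputable def pos (s : V → IPSeg) (v : V) (i : Bool) : ℕ :=
  (Finset.univ.filter (fun t : V × Bool => key s t.1 t.2 < key s v i)).card + 1

lemma pos_pos (s : V → IPSeg) (v : V) (i : Bool) : 1 ≤ pos s v i := Nat.le_add_left 1 _

lemma pos_le (s : V → IPSeg) (v : V) (i : Bool) : pos s v i ≤ 2 * Fintype.card V := by
  have hsub : (Finset.univ.filter (fun t : V × Bool => key s t.1 t.2 < key s v i))
      ⊆ Finset.univ.erase (v, i) := by
    intro t ht
    rw [Finset.mem_erase]
    refine ⟨?_, Finset.mem_univ _⟩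
    intro hcon
    rw [Finset.mem_filter] at ht
    subst hcon
    exact lt_irrefl _ ht.2
  have h1 : (Finset.univ.filter (fun t : V × Bool => key s t.1 t.2 < key s v i)).card
      ≤ Fintype.card (V × Bool) - 1 := by
    calc _ ≤ (Finset.univ.erase ((v, i) : V × Bool)).card := Finset.card_le_card hsub
    _ = _ := by rw [Finset.card_erase_of_mem (Finset.mem_univ _), Finset.card_univ]
  have hcard : Fintype.card (V × Bool) = 2 * Fintype.card V := by
    rw [Fintype.card_prod, Fintype.card_bool]; ring
  have hpos : 1 ≤ Fintype.card (V × Bool) := Fintype.card_pos_iff.2 ⟨(v, i)⟩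
  rw [pos]
  omega

lemma pos_lt_pos {s : V → IPSeg} {u v : V} {i j : Bool}
    (h : key s u i < key s v j) : pos s u i < pos s v j := by
  have hss : (Finset.univ.filter (fun t : V × Bool => key s t.1 t.2 < key s u i))
      ⊂ Finset.univ.filter (fun t : V × Bool => key s t.1 t.2 < key s v j) := by
    rw [Finset.ssubset_iff_of_subset]
    · exact ⟨(u, i), by simp [h], by simp⟩
    · intro t ht
      rw [Finset.mem_filter] at ht ⊢
      exact ⟨ht.1, ht.2.trans h⟩
  have := Finset.card_lt_card hss
  rw [pos, pos]
  omega

lemma pos_lt_iff {s : V → IPSeg} {u v : V} {i j : Bool} :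
    pos s u i < pos s v j ↔ key s u i < key s v j := by
  constructor
  · intro h
    rcases lt_trichotomy (key s u i) (key s v j) with h1 | h1 | h1
    · exact h1
    · exfalso; rw [pos, pos, h1] at h; omega
    · exact absurd (pos_lt_pos h1) (by omega)
  · exact pos_lt_pos

lemma pos_le_iff {s : V → IPSeg} {u v : V} {i j : Bool} :
    pos s u i ≤ pos s v j ↔ key s u i ≤ key s v j := by
  rw [← not_lt, ← not_lt, not_iff_not]
  exact pos_lt_iff

lemma pos_ne {s : V → IPSeg} {u v : V} {i j : Bool} (h : key s u i ≠ key s v j) :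
    pos s u i ≠ pos s v j := by
  rcases h.lt_or_gt with h1 | h1
  · exact (pos_lt_pos h1).ne
  · exact (pos_lt_pos h1).ne'

open IPSeg

noncomputable def nice (s : V → IPSeg) (v : V) : IPSeg :=
  if (s v).IsInterval then
    { p := ((pos s v false : ℝ), (s v).line)
      q := ((pos s v true : ℝ), (s v).line)
      hp := (s v).hp
      hq := (s v).hp }
  else
    { p := ((pos s v false : ℝ), 1)
      q := ((pos s v true : ℝ), 2)
      hp := Or.inl rfl
      hq := Or.inr rfl }

lemma key_ff_le_key_tt (s : V → IPSeg) (v : V) (h : (s v).IsInterval) :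
    key s v false ≤ key s v true := by
  rw [key, if_pos h, key, if_pos h, if_pos rfl]
  simp only [Bool.false_eq_true, if_false]
  exact (mkK_le_of_zone_lt (by norm_num)).2 (s v).lo_le_hi

lemma nice_int {s : V → IPSeg} {v : V} (h : (s v).IsInterval) :
    (nice s v).IsInterval ∧ (nice s v).line = (s v).line ∧
      (nice s v).lo = (pos s v false : ℝ) ∧ (nice s v).hi = (pos s v true : ℝ) ∧
      (nice s v).p.2 = (s v).p.2 := by
  have hle : (pos s v false : ℝ) ≤ (pos s v true : ℝ) := by
    exact_mod_cast pos_le_iff.2 (key_ff_le_key_tt s v h)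
  rw [nice, if_pos h]
  exact ⟨rfl, rfl, min_eq_left hle, max_eq_right hle, rfl⟩

lemma nice_perm {s : V → IPSeg} {v : V} (h : ¬ (s v).IsInterval) :
    (nice s v).IsPermutation ∧ (nice s v).bot = (pos s v false : ℝ) ∧
      (nice s v).top = (pos s v true : ℝ) := by
  rw [nice, if_neg h]
  refine ⟨by norm_num [IsPermutation], ?_, ?_⟩ <;> simp [bot, top]

lemma nice_endpoints {s : V → IPSeg} {v : V} {e : ℝ × ℝ} (he : e ∈ (nice s v).endpoints) :
    ∃ i : Bool, e.1 = (pos s v i : ℝ) := by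
  rw [nice] at he
  by_cases h : (s v).IsInterval <;> [rw [if_pos h] at he; rw [if_neg h] at he] <;>
    rcases he with he | he <;> subst he
  · exact ⟨false, rfl⟩
  · exact ⟨true, rfl⟩
  · exact ⟨false, rfl⟩
  · exact ⟨true, rfl⟩

lemma key_int_ff {s : V → IPSeg} {v : V} (h : (s v).IsInterval) :
    key s v false = mkK (s v).lo 0 0 (ix v) := by
  rw [key, if_pos h]; rfl

lemma key_int_tt {s : V → IPSeg} {v : V} (h : (s v).IsInterval) :
    key s v true = mkK (s v).hi 2 0 (ix v) := by
  rw [key, if_pos h]; rfl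

lemma key_perm_ff {s : V → IPSeg} {v : V} (h : ¬ (s v).IsInterval) :
    key s v false = mkK (s v).bot 1 (-(s v).top) (-(ix v) - 1) := by
  rw [key, if_neg h]; rfl

lemma key_perm_tt {s : V → IPSeg} {v : V} (h : ¬ (s v).IsInterval) :
    key s v true = mkK (s v).top 1 (-(s v).bot) (ix v) := by
  rw [key, if_neg h]; rfl

lemma key_ne {s : V → IPSeg} {u v : V} (huv : u ≠ v) (i j : Bool) :
    key s u i ≠ key s v j := by
  have hu := ix_nonneg u
  have hv := ix_nonneg v
  have hix : ix u ≠ ix v := fun h => huv (ix_inj h)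
  intro h
  by_cases h1 : (s u).IsInterval <;> by_cases h2 : (s v).IsInterval <;>
    cases i <;> cases j <;>
    first
      | (rw [key_int_ff h1] at h) | (rw [key_int_tt h1] at h)
      | (rw [key_perm_ff h1] at h) | (rw [key_perm_tt h1] at h)
  all_goals first
      | (rw [key_int_ff h2, mkK_inj] at h) | (rw [key_int_tt h2, mkK_inj] at h)
      | (rw [key_perm_ff h2, mkK_inj] at h) | (rw [key_perm_tt h2, mkK_inj] at h)
  all_goals obtain ⟨-, hm, -, hz⟩ := h
  all_goals omega

lemma sign_iff {x y z w : ℝ} (hxy : x ≠ y) (hzw : z ≠ w) :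
    (x - y) * (z - w) ≤ 0 ↔ (x < y ↔ w < z) := by
  rcases hxy.lt_or_gt with h | h <;> rcases hzw.lt_or_gt with h' | h'
  · exact iff_of_false (by nlinarith)
      (by rw [iff_true_intro h, true_iff]; exact not_lt.2 h'.le)
  · exact iff_of_true (by nlinarith) ⟨fun _ => h', fun _ => h⟩
  · exact iff_of_true (by nlinarith)
      ⟨fun hc => absurd hc (not_lt.2 h.le), fun hc => absurd hc (not_lt.2 h'.le)⟩
  · exact iff_of_false (by nlinarith)
      (by rw [iff_true_intro h', iff_true]; exact not_lt.2 h.le)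

lemma case_int_int {s : V → IPSeg} {u v : V}
    (h1 : (s u).IsInterval) (h2 : (s v).IsInterval) :
    (((nice s u).carrier ∩ (nice s v).carrier).Nonempty ↔
      ((s u).carrier ∩ (s v).carrier).Nonempty) := by
  obtain ⟨hI1, hl1, hlo1, hhi1, -⟩ := nice_int h1
  obtain ⟨hI2, hl2, hlo2, hhi2, -⟩ := nice_int h2
  rw [meets_int_int hI1 hI2, meets_int_int h1 h2, hl1, hl2, hlo1, hhi1, hlo2, hhi2]
  apply and_congr Iff.rfl
  apply and_congr
  · rw [Nat.cast_le, pos_le_iff, key_int_ff h1, key_int_tt h2]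
    exact mkK_le_of_zone_lt (by norm_num)
  · rw [Nat.cast_le, pos_le_iff, key_int_ff h2, key_int_tt h1]
    exact mkK_le_of_zone_lt (by norm_num)

lemma case_int_perm {s : V → IPSeg} {u v : V}
    (h1 : (s u).IsInterval) (h2 : ¬ (s v).IsInterval) :
    (((nice s u).carrier ∩ (nice s v).carrier).Nonempty ↔
      ((s u).carrier ∩ (s v).carrier).Nonempty) := by
  obtain ⟨hI1, hl1, hlo1, hhi1, -⟩ := nice_int h1
  obtain ⟨hP2, hb2, ht2⟩ := nice_perm h2
  have h2' : (s v).IsPermutation := h2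
  rw [meets_int_perm hI1 hP2, meets_int_perm h1 h2', hl1, hb2, ht2, hlo1, hhi1]
  rcases (s u).line_mem with hl | hl
  · rw [if_pos hl, if_pos hl]
    apply and_congr
    · rw [Nat.cast_le, pos_le_iff, key_int_ff h1, key_perm_ff h2]
      exact mkK_le_of_zone_lt (show (0:ℕ) < 1 by norm_num)
    · rw [Nat.cast_le, pos_le_iff, key_perm_ff h2, key_int_tt h1]
      exact mkK_le_of_zone_lt (show (1:ℕ) < 2 by norm_num)
  · have hne : ¬ (s u).line = 1 := by rw [hl]; norm_num
    rw [if_neg hne, if_neg hne]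
    apply and_congr
    · rw [Nat.cast_le, pos_le_iff, key_int_ff h1, key_perm_tt h2]
      exact mkK_le_of_zone_lt (show (0:ℕ) < 1 by norm_num)
    · rw [Nat.cast_le, pos_le_iff, key_perm_tt h2, key_int_tt h1]
      exact mkK_le_of_zone_lt (show (1:ℕ) < 2 by norm_num)

lemma case_perm_perm {s : V → IPSeg} {u v : V} (huv : u ≠ v)
    (h1 : ¬ (s u).IsInterval) (h2 : ¬ (s v).IsInterval) :
    (((nice s u).carrier ∩ (nice s v).carrier).Nonempty ↔
      ((s u).carrier ∩ (s v).carrier).Nonempty) := by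
  obtain ⟨hP1, hb1, ht1⟩ := nice_perm h1
  obtain ⟨hP2, hb2, ht2⟩ := nice_perm h2
  have h1' : (s u).IsPermutation := h1
  have h2' : (s v).IsPermutation := h2
  rw [meets_perm_perm hP1 hP2, meets_perm_perm h1' h2', hb1, ht1, hb2, ht2]
  have hne1 : ((pos s u false : ℝ)) ≠ (pos s v false : ℝ) := by
    exact_mod_cast pos_ne (key_ne huv false false)
  have hne2 : ((pos s u true : ℝ)) ≠ (pos s v true : ℝ) := by
    exact_mod_cast pos_ne (key_ne huv true true)
  rw [sign_iff hne1 hne2, Nat.cast_lt, Nat.cast_lt, pos_lt_iff, pos_lt_iff,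
    key_perm_ff h1, key_perm_ff h2, key_perm_tt h1, key_perm_tt h2,
    mkK_lt_mkK, mkK_lt_mkK]
  set a := (s u).bot
  set a' := (s v).bot
  set b := (s u).top
  set b' := (s v).top
  clear_value a a' b b'
  have hxlt : (-(ix u) - 1 < -(ix v) - 1) ↔ ix v < ix u := by omega
  rcases lt_trichotomy a a' with ha | ha | ha <;>
    rcases lt_trichotomy b b' with hb | hb | hb
  · -- a < a', b < b' : P1 true, P2 false; RHS false
    exact iff_of_false
      (by intro hiff
          rcases hiff.1 (Or.inl ha) with hc | ⟨hc, -⟩ <;> linarith)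
      (by nlinarith)
  · -- a < a', b = b' : P1 true, P2 true (b=b' ∧ -a'< -a)
    subst hb
    exact iff_of_true
      (by constructor <;> intro <;> [right; left] <;>
        [exact ⟨rfl, Or.inr ⟨rfl, Or.inl (by linarith)⟩⟩; exact ha]; )
      (by nlinarith)
  · -- a < a', b' < b : P1 true, P2 true
    exact iff_of_true
      (by constructor <;> intro <;> [left; left] <;> [exact hb; exact ha])
      (by nlinarith)
  · -- a = a', b < b' : P1 false, P2 false
    subst ha
    exact iff_of_true
      (by constructor <;> intro hc <;> exfalso <;>
        [rcases hc with hc | ⟨-, hc | ⟨-, hc | ⟨hc, -⟩⟩⟩;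
         rcases hc with hc | ⟨hc, -⟩] <;> first | exact lt_irrefl _ hc | linarith | omega)
      (by nlinarith)
  · -- a = a', b = b' : both reduce to ix v < ix u
    subst ha; subst hb
    refine iff_of_true ⟨fun hc => ?_, fun hc => ?_⟩ (by nlinarith)
    · rcases hc with hc | ⟨-, hc | ⟨-, hc | ⟨-, hc⟩⟩⟩
      · exact absurd hc (lt_irrefl _)
      · exact absurd hc (lt_irrefl _)
      · exact absurd hc (lt_irrefl _)
      · exact Or.inr ⟨rfl, Or.inr ⟨rfl, Or.inr ⟨rfl, hxlt.1 hc⟩⟩⟩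
    · rcases hc with hc | ⟨-, hc | ⟨-, hc | ⟨-, hc⟩⟩⟩
      · exact absurd hc (lt_irrefl _)
      · exact absurd hc (lt_irrefl _)
      · exact absurd hc (lt_irrefl _)
      · exact Or.inr ⟨rfl, Or.inr ⟨rfl, Or.inr ⟨rfl, hxlt.2 hc⟩⟩⟩
  · -- a = a', b' < b : P1 true, P2 true
    subst ha
    exact iff_of_true
      (by constructor <;> intro <;> [left; right] <;>
        [exact hb; exact ⟨rfl, Or.inr ⟨rfl, Or.inl (by linarith)⟩⟩])
      (by nlinarith)
  · -- a' < a, b < b' : P1 false, P2 false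
    exact iff_of_true
      (by constructor <;> intro hc <;> exfalso <;>
        [rcases hc with hc | ⟨hc, -⟩; rcases hc with hc | ⟨hc, -⟩] <;>
          first | linarith | omega)
      (by nlinarith)
  · -- a' < a, b = b' : P1 false, P2 false
    subst hb
    exact iff_of_true
      (by constructor <;> intro hc <;> exfalso <;>
        [rcases hc with hc | ⟨hc, -⟩;
         rcases hc with hc | ⟨-, hc | ⟨-, hc | ⟨hc, -⟩⟩⟩] <;>
          first | exact lt_irrefl _ hc | linarith | omega)
      (by nlinarith)
  · -- a' < a, b' < b : P1 false, P2 true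
    exact iff_of_false
      (by intro hiff
          rcases hiff.2 (Or.inl hb) with hc | ⟨hc, -⟩ <;> linarith)
      (by nlinarith)

variable {V : Type} [Fintype V]

lemma nice_meets_iff {s : V → IPSeg} {u v : V} (huv : u ≠ v) :
    (((nice s u).carrier ∩ (nice s v).carrier).Nonempty ↔
      ((s u).carrier ∩ (s v).carrier).Nonempty) := by
  by_cases h1 : (s u).IsInterval <;> by_cases h2 : (s v).IsInterval
  · exact case_int_int h1 h2
  · exact case_int_perm h1 h2
  · rw [Set.inter_comm ((nice s u).carrier), Set.inter_comm ((s u).carrier)]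
    exact case_int_perm h2 h1
  · exact case_perm_perm huv h1 h2

lemma nice_is_nice (s : V → IPSeg) : NiceModel (nice s) := by
  constructor
  · intro v e he
    obtain ⟨i, hi⟩ := nice_endpoints he
    exact ⟨pos s v i, pos_pos s v i, pos_le s v i, hi⟩
  · intro u v huv e heu hev
    obtain ⟨i, hi⟩ := nice_endpoints heu
    obtain ⟨j, hj⟩ := nice_endpoints hev
    have : (pos s u i : ℝ) = (pos s v j : ℝ) := by rw [← hi, ← hj]
    have : pos s u i = pos s v j := by exact_mod_cast this
    exact pos_ne (key_ne huv i j) this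

lemma nice_main {G : SimpleGraph V} {s : V → IPSeg} (hs : IsIPSEGModel G s) :
    IsIPSEGModel G (nice s) ∧ NiceModel (nice s) ∧
      (∀ v : V, (nice s v).IsInterval → (s v).IsInterval ∧ (nice s v).p.2 = (s v).p.2) := by
  refine ⟨fun u v huv => (hs u v huv).trans (nice_meets_iff huv).symm, nice_is_nice s, ?_⟩
  intro v hv
  by_cases h : (s v).IsInterval
  · exact ⟨h, (nice_int h).2.2.2.2⟩
  · exfalso
    exact (nice_perm h).1 hv

/-- Every IP-SEG graph on `n` vertices has an IP-SEG model whose endpoint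
`x`-coordinates lie in `{1, …, 2n}` and in which no two segments of distinct
vertices share an endpoint; moreover, every IP-SEG* graph has such a model
that is additionally an IP-SEG* model. -/
theorem exists_nice_model {V : Type} [Fintype V] (G : SimpleGraph V) :
    ((∃ s : V → IPSeg, IsIPSEGModel G s) →
      ∃ s : V → IPSeg, IsIPSEGModel G s ∧ NiceModel s) ∧
    ((∃ s : V → IPSeg, IsIPSEGStarModel G s) →
      ∃ s : V → IPSeg, IsIPSEGStarModel G s ∧ NiceModel s) := by
  constructor
  · rintro ⟨s, hs⟩
    obtain ⟨h1, h2, -⟩ := nice_main hs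
    exact ⟨nice s, h1, h2⟩
  · rintro ⟨s, hs, c, hc, hint⟩
    obtain ⟨h1, h2, h3⟩ := nice_main hs
    refine ⟨nice s, ⟨h1, c, hc, fun v hv => ?_⟩, h2⟩
    obtain ⟨hIv, hp2⟩ := h3 v hv
    rw [hp2]
    exact hint v hIv
end

section
/- For every n ≥ 1, the number of graphs on the labeled vertex set {1, …, n} that are IP-SEG graphs is at most (2n)^(4n). (Hence the classes of IP-SEG and IP-SEG* graphs contain at most 2^{O(n log n)} labeled graphs on n vertices.) -/
section Aux
open Set

lemma param_iff (a b x : ℝ) :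
    (∃ t ∈ Set.Icc (0:ℝ) 1, x = a + t * (b - a)) ↔ min a b ≤ x ∧ x ≤ max a b := by
  have himg : (∃ t ∈ Set.Icc (0:ℝ) 1, x = a + t * (b - a)) ↔ x ∈ segment ℝ a b := by
    rw [segment_eq_image']
    simp [smul_eq_mul, eq_comm]
  rw [himg, segment_eq_uIcc, Set.mem_uIcc]
  rcases le_total a b with h | h
  · rw [min_eq_left h, max_eq_right h]
    constructor
    · rintro (⟨h1, h2⟩ | ⟨h1, h2⟩) <;> constructor <;> linarith
    · exact fun ⟨h1, h2⟩ => Or.inl ⟨h1, h2⟩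
  · rw [min_eq_right h, max_eq_left h]
    constructor
    · rintro (⟨h1, h2⟩ | ⟨h1, h2⟩) <;> constructor <;> linarith
    · exact fun ⟨h1, h2⟩ => Or.inr ⟨h1, h2⟩

lemma mem_seg2 (p q x : ℝ × ℝ) :
    x ∈ segment ℝ p q ↔
      ∃ t ∈ Set.Icc (0:ℝ) 1, x.1 = p.1 + t * (q.1 - p.1) ∧ x.2 = p.2 + t * (q.2 - p.2) := by
  rw [segment_eq_image']
  constructor
  · rintro ⟨t, ht, rfl⟩
    exact ⟨t, ht, by simp [smul_eq_mul], by simp [smul_eq_mul]⟩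
  · rintro ⟨t, ht, h1, h2⟩
    refine ⟨t, ht, ?_⟩
    ext
    · simp [smul_eq_mul, h1]
    · simp [smul_eq_mul, h2]

lemma horiz_horiz (a b c d α γ : ℝ) :
    (segment ℝ (a, α) (b, α) ∩ segment ℝ (c, γ) (d, γ)).Nonempty ↔
      α = γ ∧ min a b ≤ max c d ∧ min c d ≤ max a b := by
  constructor
  · rintro ⟨x, hx1, hx2⟩
    rw [mem_seg2] at hx1 hx2
    obtain ⟨t, ht, ht1, ht2⟩ := hx1
    obtain ⟨u, hu, hu1, hu2⟩ := hx2
    simp only [sub_self, mul_zero, add_zero] at ht2 hu2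
    have h1 := (param_iff a b x.1).mp ⟨t, ht, ht1⟩
    have h2 := (param_iff c d x.1).mp ⟨u, hu, hu1⟩
    exact ⟨ht2 ▸ hu2, le_trans h1.1 h2.2, le_trans h2.1 h1.2⟩
  · rintro ⟨rfl, h1, h2⟩
    obtain ⟨t, ht, htx⟩ := (param_iff a b (max (min a b) (min c d))).mpr
      ⟨le_max_left _ _, max_le min_le_max h2⟩
    obtain ⟨u, hu, hux⟩ := (param_iff c d (max (min a b) (min c d))).mpr
      ⟨le_max_right _ _, max_le h1 min_le_max⟩
    exact ⟨(max (min a b) (min c d), α),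
      (mem_seg2 ..).mpr ⟨t, ht, htx, by ring⟩,
      (mem_seg2 ..).mpr ⟨u, hu, hux, by ring⟩⟩

lemma horiz_slant (a b c d α δ : ℝ) (h : δ ≠ α) :
    (segment ℝ (a, α) (b, α) ∩ segment ℝ (c, α) (d, δ)).Nonempty ↔
      min a b ≤ c ∧ c ≤ max a b := by
  constructor
  · rintro ⟨x, hx1, hx2⟩
    rw [mem_seg2] at hx1 hx2
    obtain ⟨t, ht, ht1, ht2⟩ := hx1
    obtain ⟨u, hu, hu1, hu2⟩ := hx2
    simp only [sub_self, mul_zero, add_zero] at ht2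
    have hu0 : u = 0 := by
      have h0 : u * (δ - α) = 0 := by rw [ht2] at hu2; linarith
      rcases mul_eq_zero.mp h0 with h' | h'
      · exact h'
      · exact absurd (by linarith : δ = α) h
    rw [hu0, zero_mul, add_zero] at hu1
    dsimp only at hu1
    rw [hu1] at ht1
    exact (param_iff a b c).mp ⟨t, ht, ht1⟩
  · intro hc
    obtain ⟨t, ht, htx⟩ := (param_iff a b c).mpr hc
    exact ⟨(c, α), (mem_seg2 ..).mpr ⟨t, ht, htx, by ring⟩,
      (mem_seg2 ..).mpr ⟨0, by norm_num, by ring, by ring⟩⟩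

lemma slant_slant (a b c d y1 y2 : ℝ) (h : y1 ≠ y2) :
    (segment ℝ (a, y1) (b, y2) ∩ segment ℝ (c, y1) (d, y2)).Nonempty ↔
      min (a - c) (b - d) ≤ 0 ∧ 0 ≤ max (a - c) (b - d) := by
  constructor
  · rintro ⟨x, hx1, hx2⟩
    rw [mem_seg2] at hx1 hx2
    obtain ⟨t, ht, ht1, ht2⟩ := hx1
    obtain ⟨u, hu, hu1, hu2⟩ := hx2
    have htu : t = u := by
      have h0 : (t - u) * (y2 - y1) = 0 := by dsimp only at ht2 hu2; linear_combination hu2 - ht2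
      rcases mul_eq_zero.mp h0 with h' | h'
      · linarith [sub_eq_zero.mp h']
      · exact absurd (by linarith : y1 = y2) h
    subst htu
    refine (param_iff (a - c) (b - d) 0).mp ⟨t, ht, ?_⟩
    dsimp only at ht1 hu1 ⊢; linear_combination ht1 - hu1
  · rintro ⟨h1, h2⟩
    obtain ⟨t, ht, h0⟩ := (param_iff (a - c) (b - d) 0).mpr ⟨h1, h2⟩
    refine ⟨(a + t * (b - a), y1 + t * (y2 - y1)),
      (mem_seg2 ..).mpr ⟨t, ht, rfl, rfl⟩,
      (mem_seg2 ..).mpr ⟨t, ht, by dsimp only; linear_combination -h0, rfl⟩⟩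

lemma invariant (σ : ℝ → ℝ) (a b c d α β γ δ : ℝ)
    (hab : σ a ≤ σ b ↔ a ≤ b) (hba : σ b ≤ σ a ↔ b ≤ a)
    (hac : σ a ≤ σ c ↔ a ≤ c) (hca : σ c ≤ σ a ↔ c ≤ a)
    (had : σ a ≤ σ d ↔ a ≤ d) (hda : σ d ≤ σ a ↔ d ≤ a)
    (hbc : σ b ≤ σ c ↔ b ≤ c) (hcb : σ c ≤ σ b ↔ c ≤ b)
    (hbd : σ b ≤ σ d ↔ b ≤ d) (hdb : σ d ≤ σ b ↔ d ≤ b)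
    (hcd : σ c ≤ σ d ↔ c ≤ d) (hdc : σ d ≤ σ c ↔ d ≤ c)
    (hα : α = 1 ∨ α = 2) (hβ : β = 1 ∨ β = 2) (hγ : γ = 1 ∨ γ = 2) (hδ : δ = 1 ∨ δ = 2)
    (hαβ : α ≤ β) (hγδ : γ ≤ δ) :
    ((segment ℝ (σ a, α) (σ b, β) ∩ segment ℝ (σ c, γ) (σ d, δ)).Nonempty ↔
      (segment ℝ (a, α) (b, β) ∩ segment ℝ (c, γ) (d, δ)).Nonempty) := by
  have h12 : (2:ℝ) ≠ 1 := by norm_num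
  have h21 : (1:ℝ) ≠ 2 := by norm_num
  rcases hα with rfl | rfl <;> rcases hβ with rfl | rfl <;>
    rcases hγ with rfl | rfl <;> rcases hδ with rfl | rfl
  · -- 1 1 1 1
    rw [horiz_horiz, horiz_horiz]
    simp only [min_le_iff, le_max_iff, hab, hba, hac, hca, had, hda, hbc, hcb, hbd, hdb,
      hcd, hdc]
  · -- 1 1 1 2
    rw [horiz_slant _ _ _ _ _ _ h12, horiz_slant _ _ _ _ _ _ h12]
    simp only [min_le_iff, le_max_iff, hac, hca, hbc, hcb]
  · -- 1 1 2 1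
    exact absurd hγδ (by norm_num)
  · -- 1 1 2 2
    rw [horiz_horiz, horiz_horiz]
    norm_num
  · -- 1 2 1 1
    rw [Set.inter_comm (segment ℝ (σ a, 1) (σ b, 2)), Set.inter_comm (segment ℝ (a, 1) (b, 2)),
      horiz_slant _ _ _ _ _ _ h12, horiz_slant _ _ _ _ _ _ h12]
    simp only [min_le_iff, le_max_iff, hac, hca, had, hda]
  · -- 1 2 1 2
    rw [slant_slant _ _ _ _ _ _ h21, slant_slant _ _ _ _ _ _ h21]
    simp only [min_le_iff, le_max_iff, sub_nonpos, sub_nonneg, hac, hca, hbd, hdb]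
  · -- 1 2 2 1
    exact absurd hγδ (by norm_num)
  · -- 1 2 2 2
    rw [Set.inter_comm (segment ℝ (σ a, 1) (σ b, 2)), Set.inter_comm (segment ℝ (a, 1) (b, 2)),
      segment_symm ℝ (σ a, 1) (σ b, 2), segment_symm ℝ (a, 1) (b, 2),
      horiz_slant _ _ _ _ _ _ h21, horiz_slant _ _ _ _ _ _ h21]
    simp only [min_le_iff, le_max_iff, hbc, hcb, hbd, hdb]
  · -- 2 1 _ _
    exact absurd hαβ (by norm_num)
  · exact absurd hαβ (by norm_num)
  · exact absurd hαβ (by norm_num)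
  · exact absurd hαβ (by norm_num)
  · -- 2 2 1 1
    rw [horiz_horiz, horiz_horiz]
    norm_num
  · -- 2 2 1 2
    rw [segment_symm ℝ (σ c, 1) (σ d, 2), segment_symm ℝ (c, 1) (d, 2),
      horiz_slant _ _ _ _ _ _ h21, horiz_slant _ _ _ _ _ _ h21]
    simp only [min_le_iff, le_max_iff, had, hda, hbd, hdb]
  · -- 2 2 2 1
    exact absurd hγδ (by norm_num)
  · -- 2 2 2 2
    rw [horiz_horiz, horiz_horiz]
    simp only [min_le_iff, le_max_iff, hab, hba, hac, hca, had, hda, hbc, hcb, hbd, hdb,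
      hcd, hdc]

-- rank machinery
noncomputable def rnk (X : Finset ℝ) (x : ℝ) : ℕ := (X.filter (fun y => y ≤ x)).card

lemma rnk_le_card (X : Finset ℝ) (x : ℝ) : rnk X x ≤ X.card := Finset.card_filter_le _ _

lemma one_le_rnk {X : Finset ℝ} {x : ℝ} (hx : x ∈ X) : 1 ≤ rnk X x :=
  Finset.card_pos.mpr ⟨x, Finset.mem_filter.mpr ⟨hx, le_refl x⟩⟩

lemma rnk_mono (X : Finset ℝ) {x y : ℝ} (h : x ≤ y) : rnk X x ≤ rnk X y := by
  apply Finset.card_le_card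
  intro z hz
  simp only [Finset.mem_filter] at hz ⊢
  exact ⟨hz.1, hz.2.trans h⟩

lemma rnk_strict {X : Finset ℝ} {x y : ℝ} (hy : y ∈ X) (h : x < y) : rnk X x < rnk X y := by
  apply Finset.card_lt_card
  constructor
  · intro z hz
    simp only [Finset.mem_filter] at hz ⊢
    exact ⟨hz.1, hz.2.trans h.le⟩
  · intro hsub
    have hyy : y ∈ X.filter (fun z => z ≤ x) := hsub (Finset.mem_filter.mpr ⟨hy, le_refl y⟩)
    have := (Finset.mem_filter.mp hyy).2
    exact absurd this (not_le.mpr h)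

lemma rnk_le_iff {X : Finset ℝ} {x y : ℝ} (hx : x ∈ X) (hy : y ∈ X) :
    rnk X x ≤ rnk X y ↔ x ≤ y := by
  constructor
  · intro h
    by_contra hxy
    exact absurd (rnk_strict hx (not_le.mp hxy)) (not_lt.mpr h)
  · exact rnk_mono X

lemma cast_rnk_le_iff {X : Finset ℝ} {x y : ℝ} (hx : x ∈ X) (hy : y ∈ X) :
    ((rnk X x : ℝ) ≤ (rnk X y : ℝ)) ↔ x ≤ y := by
  rw [Nat.cast_le]
  exact rnk_le_iff hx hy

-- normalization
def IPSeg.swap (s : IPSeg) : IPSeg := ⟨s.q, s.p, s.hq, s.hp⟩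

noncomputable def IPSeg.norm (s : IPSeg) : IPSeg :=
  if s.p.2 ≤ s.q.2 then s else s.swap

lemma IPSeg.norm_carrier (s : IPSeg) : s.norm.carrier = s.carrier := by
  rw [IPSeg.norm]
  split_ifs with h
  · rfl
  · show segment ℝ s.q s.p = segment ℝ s.p s.q
    exact segment_symm ℝ s.q s.p

lemma IPSeg.norm_le (s : IPSeg) : s.norm.p.2 ≤ s.norm.q.2 := by
  rw [IPSeg.norm]
  split_ifs with h
  · exact h
  · exact le_of_not_ge h

lemma isModel_norm {V : Type*} {G : SimpleGraph V} {s : V → IPSeg}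
    (h : IsIPSEGModel G s) : IsIPSEGModel G (fun v => (s v).norm) := by
  intro u v huv
  rw [h u v huv]
  simp only [IPSeg.norm_carrier]

-- the finite set of x-coordinates of a model
noncomputable def Xof {n : ℕ} (s : Fin n → IPSeg) : Finset ℝ :=
  (Finset.univ.image fun v => (s v).p.1) ∪ (Finset.univ.image fun v => (s v).q.1)

lemma Xof_card {n : ℕ} (s : Fin n → IPSeg) : (Xof s).card ≤ 2 * n := by
  refine (Finset.card_union_le _ _).trans ?_
  have h1 := Finset.card_image_le (s := (Finset.univ : Finset (Fin n)))
    (f := fun v => (s v).p.1)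
  have h2 := Finset.card_image_le (s := (Finset.univ : Finset (Fin n)))
    (f := fun v => (s v).q.1)
  simp only [Finset.card_univ, Fintype.card_fin] at h1 h2
  omega

lemma mem_Xof_p {n : ℕ} (s : Fin n → IPSeg) (v : Fin n) : (s v).p.1 ∈ Xof s :=
  Finset.mem_union_left _ (Finset.mem_image.mpr ⟨v, Finset.mem_univ v, rfl⟩)

lemma mem_Xof_q {n : ℕ} (s : Fin n → IPSeg) (v : Fin n) : (s v).q.1 ∈ Xof s :=
  Finset.mem_union_right _ (Finset.mem_image.mpr ⟨v, Finset.mem_univ v, rfl⟩)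

-- encoding
noncomputable def enc1 (n : ℕ) (hn : 1 ≤ n) (X : Finset ℝ) (hX : X.card ≤ 2 * n)
    (pt : ℝ × ℝ) : Fin (2 * n) × Bool :=
  (⟨rnk X pt.1 - 1, by have h := rnk_le_card X pt.1; omega⟩,
    if pt.2 = 2 then true else false)

noncomputable def encM (n : ℕ) (hn : 1 ≤ n) (s : Fin n → IPSeg) :
    Fin n → (Fin (2 * n) × Bool) × (Fin (2 * n) × Bool) := fun v =>
  (enc1 n hn (Xof s) (Xof_card s) (s v).p, enc1 n hn (Xof s) (Xof_card s) (s v).q)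

open Classical in
noncomputable def encG (n : ℕ) (hn : 1 ≤ n) (G : SimpleGraph (Fin n)) :
    Fin n → (Fin (2 * n) × Bool) × (Fin (2 * n) × Bool) :=
  if h : ∃ s : Fin n → IPSeg, IsIPSEGModel G s then
    encM n hn (fun v => (Classical.choose h v).norm)
  else fun _ => ((⟨0, by omega⟩, false), (⟨0, by omega⟩, false))

lemma bit_eq {y y' : ℝ} (hy : y = 1 ∨ y = 2) (hy' : y' = 1 ∨ y' = 2)
    (h : (if y = 2 then true else false) = (if y' = 2 then true else false)) : y = y' := by
  rcases hy with rfl | rfl <;> rcases hy' with rfl | rfl <;> simp_all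

lemma model_adj_iff {n : ℕ} {G : SimpleGraph (Fin n)} {s : Fin n → IPSeg}
    (hm : IsIPSEGModel G s) (hnorm : ∀ v, (s v).p.2 ≤ (s v).q.2)
    {u v : Fin n} (huv : u ≠ v) :
    G.Adj u v ↔
      (segment ℝ ((rnk (Xof s) (s u).p.1 : ℝ), (s u).p.2)
          ((rnk (Xof s) (s u).q.1 : ℝ), (s u).q.2) ∩
        segment ℝ ((rnk (Xof s) (s v).p.1 : ℝ), (s v).p.2)
          ((rnk (Xof s) (s v).q.1 : ℝ), (s v).q.2)).Nonempty := by
  rw [hm u v huv]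
  have hcar : ∀ w : Fin n, (s w).carrier =
      segment ℝ ((s w).p.1, (s w).p.2) ((s w).q.1, (s w).q.2) := fun w => rfl
  rw [hcar u, hcar v]
  exact (invariant (fun x => (rnk (Xof s) x : ℝ))
    ((s u).p.1) ((s u).q.1) ((s v).p.1) ((s v).q.1)
    ((s u).p.2) ((s u).q.2) ((s v).p.2) ((s v).q.2)
    (cast_rnk_le_iff (mem_Xof_p s u) (mem_Xof_q s u))
    (cast_rnk_le_iff (mem_Xof_q s u) (mem_Xof_p s u))
    (cast_rnk_le_iff (mem_Xof_p s u) (mem_Xof_p s v))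
    (cast_rnk_le_iff (mem_Xof_p s v) (mem_Xof_p s u))
    (cast_rnk_le_iff (mem_Xof_p s u) (mem_Xof_q s v))
    (cast_rnk_le_iff (mem_Xof_q s v) (mem_Xof_p s u))
    (cast_rnk_le_iff (mem_Xof_q s u) (mem_Xof_p s v))
    (cast_rnk_le_iff (mem_Xof_p s v) (mem_Xof_q s u))
    (cast_rnk_le_iff (mem_Xof_q s u) (mem_Xof_q s v))
    (cast_rnk_le_iff (mem_Xof_q s v) (mem_Xof_q s u))
    (cast_rnk_le_iff (mem_Xof_p s v) (mem_Xof_q s v))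
    (cast_rnk_le_iff (mem_Xof_q s v) (mem_Xof_p s v))
    (s u).hp (s u).hq (s v).hp (s v).hq (hnorm u) (hnorm v)).symm

end Aux

/-- For every `n ≥ 1`, the number of labeled graphs on vertex set `{1, …, n}`
that are IP-SEG graphs is at most `(2n)^(4n)`. -/
theorem card_IPSEG_graphs_le (n : ℕ) (hn : 1 ≤ n) :
    {G : SimpleGraph (Fin n) | ∃ s : Fin n → IPSeg, IsIPSEGModel G s}.ncard ≤
      (2 * n) ^ (4 * n) := by
  classical
  have hinj : Set.InjOn (encG n hn)
      {G : SimpleGraph (Fin n) | ∃ s : Fin n → IPSeg, IsIPSEGModel G s} := by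
    intro G hG G' hG' he
    replace hG : ∃ s, IsIPSEGModel G s := hG
    replace hG' : ∃ s, IsIPSEGModel G' s := hG'
    rw [encG, dif_pos hG, encG, dif_pos hG'] at he
    set s := fun v => (Classical.choose hG v).norm with hs
    set s' := fun v => (Classical.choose hG' v).norm with hs'
    have hm : IsIPSEGModel G s := isModel_norm (Classical.choose_spec hG)
    have hm' : IsIPSEGModel G' s' := isModel_norm (Classical.choose_spec hG')
    have hnorm : ∀ v, (s v).p.2 ≤ (s v).q.2 := fun v => IPSeg.norm_le _
    have hnorm' : ∀ v, (s' v).p.2 ≤ (s' v).q.2 := fun v => IPSeg.norm_le _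
    have hpt : ∀ w : Fin n,
        ((rnk (Xof s) (s w).p.1 : ℝ) = (rnk (Xof s') (s' w).p.1 : ℝ)) ∧
        (s w).p.2 = (s' w).p.2 ∧
        ((rnk (Xof s) (s w).q.1 : ℝ) = (rnk (Xof s') (s' w).q.1 : ℝ)) ∧
        (s w).q.2 = (s' w).q.2 := by
      intro w
      have hw := congrFun he w
      simp only [encM, enc1, Prod.mk.injEq, Fin.mk.injEq] at hw
      obtain ⟨⟨h1, h2⟩, h3, h4⟩ := hw
      have a1 := one_le_rnk (mem_Xof_p s w)
      have a2 := one_le_rnk (mem_Xof_p s' w)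
      have a3 := one_le_rnk (mem_Xof_q s w)
      have a4 := one_le_rnk (mem_Xof_q s' w)
      have e1 : rnk (Xof s) (s w).p.1 = rnk (Xof s') (s' w).p.1 := by omega
      have e3 : rnk (Xof s) (s w).q.1 = rnk (Xof s') (s' w).q.1 := by omega
      exact ⟨by exact_mod_cast e1, bit_eq (s w).hp (s' w).hp h2,
        by exact_mod_cast e3, bit_eq (s w).hq (s' w).hq h4⟩
    ext u v
    by_cases huv : u = v
    · subst huv; simp
    · rw [model_adj_iff hm hnorm huv, model_adj_iff hm' hnorm' huv]
      obtain ⟨e1, e2, e3, e4⟩ := hpt u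
      obtain ⟨f1, f2, f3, f4⟩ := hpt v
      rw [e1, e2, e3, e4, f1, f2, f3, f4]
  have hle := Set.ncard_le_ncard_of_injOn (encG n hn)
    (fun G _ => Set.mem_univ _) hinj Set.finite_univ
  refine hle.trans ?_
  have hcard : (Set.univ :
      Set (Fin n → (Fin (2 * n) × Bool) × (Fin (2 * n) × Bool))).ncard =
      (2 * n * 2 * (2 * n * 2)) ^ n := by
    rw [Set.ncard_univ, Nat.card_eq_fintype_card]
    simp [Fintype.card_fun, Fintype.card_prod, Fintype.card_bool, Fintype.card_fin]
  rw [hcard]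
  have h4 : (2 * n) ^ (4 * n) = ((2 * n) ^ 4) ^ n := pow_mul _ 4 n
  rw [h4]
  apply Nat.pow_le_pow_left
  have h2 : 2 ≤ 2 * n := by omega
  calc 2 * n * 2 * (2 * n * 2) ≤ 2 * n * (2 * n) * (2 * n * (2 * n)) :=
        Nat.mul_le_mul (Nat.mul_le_mul_left _ h2) (Nat.mul_le_mul_left _ h2)
    _ = (2 * n) ^ 4 := by ring
end

section
/- Let n ≥ 2 and let the path P_n on vertices v₁, …, vₙ (edges exactly vᵢv_{i+1} for 1 ≤ i ≤ n−1) have an IP-SEG model consisting only of interval segments, all lying on one horizontal line, where segment s(vᵢ) corresponds to the real interval [aᵢ, bᵢ]. Suppose no segment of the model is contained in another, and suppose a₁ is the minimum of a₁, …, aₙ. Then a₁ < a₂ < ⋯ < aₙ and b₁ < b₂ < ⋯ < bₙ; i.e., in an active interval representation of a path, the left-to-right order of the left endpoints and of the right endpoints each coincide with the path order. -/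
/-- In an active interval representation of the path `P_n` (an intersection model of
the path by closed real intervals `[a i, b i]`, all on one line, with no interval
contained in another), if the first vertex has the leftmost left endpoint, then both
the left endpoints and the right endpoints appear in path order. -/
theorem active_interval_representation_of_path (n : ℕ) (hn : 2 ≤ n)
    (a b : Fin n → ℝ) (hab : ∀ i : Fin n, a i ≤ b i)
    (hmodel : ∀ i j : Fin n, i ≠ j →
      (((i : ℕ) + 1 = (j : ℕ) ∨ (j : ℕ) + 1 = (i : ℕ)) ↔
        (Set.Icc (a i) (b i) ∩ Set.Icc (a j) (b j)).Nonempty))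
    (hnocont : ∀ i j : Fin n, i ≠ j → ¬ Set.Icc (a i) (b i) ⊆ Set.Icc (a j) (b j))
    (hmin : ∀ i : Fin n, a ⟨0, by omega⟩ ≤ a i) :
    StrictMono a ∧ StrictMono b := by

  have key : ∀ i j : Fin n, i ≠ j → a i < a j → b i < b j := by
    intro i j hij h
    by_contra hb
    push_neg at hb
    exact hnocont j i hij.symm (Set.Icc_subset_Icc h.le hb)
  have ane : ∀ i j : Fin n, i ≠ j → a i ≠ a j := by
    intro i j hij heq
    rcases le_total (b i) (b j) with h | h
    · exact hnocont i j hij (Set.Icc_subset_Icc heq.ge h)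
    · exact hnocont j i hij.symm (Set.Icc_subset_Icc heq.le h)
  have inter : ∀ i j : Fin n, (Set.Icc (a i) (b i) ∩ Set.Icc (a j) (b j)).Nonempty ↔
      (a j ≤ b i ∧ a i ≤ b j) := by
    intro i j
    rw [Set.Icc_inter_Icc, Set.nonempty_Icc]
    constructor
    · intro h
      exact ⟨le_trans (le_sup_right) (le_trans h inf_le_left),
        le_trans (le_sup_left) (le_trans h inf_le_right)⟩
    · intro ⟨h1, h2⟩
      exact sup_le (le_inf (hab i) h2) (le_inf h1 (hab j))
  have step : ∀ i : ℕ, (h : i + 1 < n) → a ⟨i, by omega⟩ < a ⟨i + 1, h⟩ := by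
    intro i
    induction i with
    | zero =>
      intro h
      have hne : (⟨0, by omega⟩ : Fin n) ≠ ⟨1, h⟩ := by simp [Fin.ext_iff]
      exact lt_of_le_of_ne (hmin ⟨1, h⟩) (ane _ _ hne)
    | succ i ih =>
      intro h
      have h1 : i + 1 < n := by omega
      have ih' := ih h1
      -- adjacency i, i+1
      have hne01 : (⟨i, by omega⟩ : Fin n) ≠ ⟨i + 1, h1⟩ := by simp [Fin.ext_iff]
      have hadj01 := ((hmodel _ _ hne01).mp (Or.inl rfl))
      rw [inter] at hadj01
      -- adjacency i+1, i+2
      have hne12 : (⟨i + 1, h1⟩ : Fin n) ≠ ⟨i + 2, by omega⟩ := by simp [Fin.ext_iff]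
      have hadj12 := ((hmodel _ _ hne12).mp (Or.inl rfl))
      rw [inter] at hadj12
      -- non-adjacency i, i+2
      have hne02 : (⟨i, by omega⟩ : Fin n) ≠ ⟨i + 2, by omega⟩ := by simp [Fin.ext_iff]
      have hnadj := (hmodel _ _ hne02)
      rw [inter] at hnadj
      have hdis : ¬ (a ⟨i + 2, by omega⟩ ≤ b ⟨i, by omega⟩ ∧
          a ⟨i, by omega⟩ ≤ b ⟨i + 2, by omega⟩) := by
        intro hc
        have h2 := hnadj.mpr hc
        simp only [Fin.val_mk] at h2
        omega
      push_neg at hdis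
      rcases lt_or_ge (b ⟨i, by omega⟩) (a ⟨i + 2, by omega⟩) with hcase | hcase
      · exact lt_of_le_of_lt hadj01.1 hcase
      · linarith [hdis hcase, ih', hadj12.2]
  have chain : ∀ k : ℕ, ∀ i : ℕ, (h : i + k + 1 < n) →
      a ⟨i, by omega⟩ < a ⟨i + k + 1, h⟩ := by
    intro k
    induction k with
    | zero => intro i h; exact step i h
    | succ k ih =>
      intro i h
      have h1 : i + k + 1 < n := by omega
      refine lt_trans (ih i h1) ?_
      exact step (i + k + 1) (by omega)
  have ha : StrictMono a := by
    intro i j hij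
    have h1 : (i : ℕ) + ((j : ℕ) - (i : ℕ) - 1) + 1 < n := by omega
    have := chain ((j : ℕ) - (i : ℕ) - 1) i h1
    have e1 : (⟨(i : ℕ), by omega⟩ : Fin n) = i := by simp [Fin.ext_iff]
    have e2 : (⟨(i : ℕ) + ((j : ℕ) - (i : ℕ) - 1) + 1, h1⟩ : Fin n) = j := by
      simp [Fin.ext_iff]; omega
    rwa [e1, e2] at this
  exact ⟨ha, fun i j hij => key i j (Fin.ne_of_lt hij) (ha hij)⟩
end

section
/- Let n ≥ 4. Every IP-SEG* model of the chordless cycle C_n that contains at least one interval segment has exactly one interval arc (and hence exactly one permutation arc). -/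
/-- The chordless cycle `C_n` on vertex set `ZMod n`, with edges exactly
`v — v + 1` (indices modulo `n`). -/
def CycleGraph (n : ℕ) : SimpleGraph (ZMod n) :=
  SimpleGraph.fromRel (fun u v => v = u + 1)

/-- `v` is the start of an interval arc: `v` is assigned an interval segment but its
cyclic predecessor is not. -/
def IntArcStart (n : ℕ) (s : ZMod n → IPSeg) (v : ZMod n) : Prop :=
  (s v).IsInterval ∧ ¬ (s (v - 1)).IsInterval

/-- The interval arc starting at `v` has length `l`: the `l` consecutive vertices
`v, v+1, …, v+l-1` carry interval segments and `v + l` does not. -/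
def IntArcLen (n : ℕ) (s : ZMod n → IPSeg) (v : ZMod n) (l : ℕ) : Prop :=
  (∀ k : ℕ, k < l → (s (v + (k : ZMod n))).IsInterval) ∧
    ¬ (s (v + (l : ZMod n))).IsInterval

/-- `v` is the start of a permutation arc. -/
def PermArcStart (n : ℕ) (s : ZMod n → IPSeg) (v : ZMod n) : Prop :=
  (s v).IsPermutation ∧ ¬ (s (v - 1)).IsPermutation

/-- The permutation arc starting at `v` has length `l`. -/
def PermArcLen (n : ℕ) (s : ZMod n → IPSeg) (v : ZMod n) (l : ℕ) : Prop :=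
  (∀ k : ℕ, k < l → (s (v + (k : ZMod n))).IsPermutation) ∧
    ¬ (s (v + (l : ZMod n))).IsPermutation


/- ======================= auxiliary lemmas ======================= -/
open Set


section Geo

lemma mem_seg (p q z : ℝ × ℝ) :
    z ∈ segment ℝ p q ↔ ∃ θ : ℝ, 0 ≤ θ ∧ θ ≤ 1 ∧
      z.1 = (1 - θ) * p.1 + θ * q.1 ∧ z.2 = (1 - θ) * p.2 + θ * q.2 := by
  rw [segment_eq_image]
  constructor
  · rintro ⟨θ, ⟨h0, h1⟩, rfl⟩
    exact ⟨θ, h0, h1, by simp, by simp⟩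
  · rintro ⟨θ, h0, h1, hz1, hz2⟩
    refine ⟨θ, ⟨h0, h1⟩, ?_⟩
    apply Prod.ext <;> simp [hz1, hz2]

lemma mem_seg1 (a b z : ℝ) :
    z ∈ segment ℝ a b ↔ ∃ θ : ℝ, 0 ≤ θ ∧ θ ≤ 1 ∧ z = (1 - θ) * a + θ * b := by
  rw [segment_eq_image]
  constructor
  · rintro ⟨θ, ⟨h0, h1⟩, rfl⟩
    exact ⟨θ, h0, h1, by simp⟩
  · rintro ⟨θ, h0, h1, hz⟩
    exact ⟨θ, ⟨h0, h1⟩, by simp [hz.symm]⟩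

lemma mem_horiz (c x1 x2 : ℝ) (z : ℝ × ℝ) :
    z ∈ segment ℝ ((x1, c) : ℝ × ℝ) ((x2, c) : ℝ × ℝ) ↔ z.2 = c ∧ z.1 ∈ Set.uIcc x1 x2 := by
  rw [mem_seg, ← segment_eq_uIcc, mem_seg1]
  constructor
  · rintro ⟨θ, h0, h1, hz1, hz2⟩
    exact ⟨by rw [hz2]; ring, θ, h0, h1, by simpa using hz1⟩
  · rintro ⟨hz2, θ, h0, h1, hz1⟩
    exact ⟨θ, h0, h1, by simpa using hz1, by rw [hz2]; ring⟩

lemma mem_perm_seg (β τ : ℝ) (z : ℝ × ℝ) :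
    z ∈ segment ℝ ((β, 1) : ℝ × ℝ) ((τ, 2) : ℝ × ℝ) ↔ ∃ θ : ℝ, 0 ≤ θ ∧ θ ≤ 1 ∧
      z.1 = (1 - θ) * β + θ * τ ∧ z.2 = 1 + θ := by
  rw [mem_seg]
  refine exists_congr fun θ => ?_
  constructor
  · rintro ⟨h0, h1, hz1, hz2⟩
    exact ⟨h0, h1, by simpa using hz1, by rw [hz2]; simp; ring⟩
  · rintro ⟨h0, h1, hz1, hz2⟩
    exact ⟨h0, h1, by simpa using hz1, by rw [hz2]; simp; ring⟩

lemma horiz_inter_perm (c x1 x2 β τ : ℝ) (hc : c = 1 ∨ c = 2) :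
    (segment ℝ ((x1, c) : ℝ × ℝ) ((x2, c) : ℝ × ℝ) ∩
      segment ℝ ((β, 1) : ℝ × ℝ) ((τ, 2) : ℝ × ℝ)).Nonempty ↔
      (if c = 1 then β else τ) ∈ Set.uIcc x1 x2 := by
  constructor
  · rintro ⟨z, hz1, hz2⟩
    rw [mem_horiz] at hz1
    rw [mem_perm_seg] at hz2
    obtain ⟨θ, h0, h1, hzx, hzy⟩ := hz2
    rcases hc with rfl | rfl
    · have hθ : θ = 0 := by rw [hz1.1] at hzy; linarith
      subst hθ
      have hzb : z.1 = β := by rw [hzx]; ring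
      rw [if_pos rfl]
      exact hzb ▸ hz1.2
    · have hθ : θ = 1 := by rw [hz1.1] at hzy; linarith
      subst hθ
      have hzb : z.1 = τ := by rw [hzx]; ring
      rw [if_neg (by norm_num : ¬ (2:ℝ) = 1)]
      exact hzb ▸ hz1.2
  · intro h
    rcases hc with rfl | rfl
    · rw [if_pos rfl] at h
      exact ⟨(β, 1), by rw [mem_horiz]; exact ⟨rfl, h⟩,
        by rw [mem_perm_seg]; exact ⟨0, le_refl _, by norm_num, by norm_num, by norm_num⟩⟩
    · rw [if_neg (by norm_num : ¬ (2:ℝ) = 1)] at h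
      exact ⟨(τ, 2), by rw [mem_horiz]; exact ⟨rfl, h⟩,
        by rw [mem_perm_seg]; exact ⟨1, by norm_num, le_refl _, by norm_num, by norm_num⟩⟩

lemma perm_inter_perm (β₁ τ₁ β₂ τ₂ : ℝ) :
    (segment ℝ ((β₁, 1) : ℝ × ℝ) ((τ₁, 2) : ℝ × ℝ) ∩
      segment ℝ ((β₂, 1) : ℝ × ℝ) ((τ₂, 2) : ℝ × ℝ)).Nonempty ↔
      (β₁ - β₂) * (τ₁ - τ₂) ≤ 0 := by
  constructor
  · rintro ⟨z, hz1, hz2⟩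
    rw [mem_perm_seg] at hz1 hz2
    obtain ⟨θ, h0, h1, hx, hy⟩ := hz1
    obtain ⟨θ', h0', h1', hx', hy'⟩ := hz2
    have hθ : θ' = θ := by rw [hy] at hy'; linarith
    rw [hθ] at hx' h0' h1'
    have key : (1 - θ) * (β₁ - β₂) + θ * (τ₁ - τ₂) = 0 := by
      rw [hx] at hx'; linarith
    have expand : (β₁ - β₂) * (τ₁ - τ₂) =
        ((1 - θ) * (β₁ - β₂) + θ * (τ₁ - τ₂)) * ((β₁ - β₂) + (τ₁ - τ₂))
          - (1 - θ) * (β₁ - β₂) ^ 2 - θ * (τ₁ - τ₂) ^ 2 := by ring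
    rw [expand, key]
    have h2 : 0 ≤ (1 - θ) * (β₁ - β₂) ^ 2 := mul_nonneg (by linarith) (sq_nonneg _)
    have h3 : 0 ≤ θ * (τ₁ - τ₂) ^ 2 := mul_nonneg h0 (sq_nonneg _)
    linarith
  · intro h
    rcases eq_or_ne (β₁ - β₂) 0 with h0 | h0
    · have hββ : β₁ = β₂ := by linarith
      refine ⟨(β₁, 1), ?_, ?_⟩
      · rw [mem_perm_seg]
        exact ⟨0, le_refl _, by norm_num, by norm_num, by norm_num⟩
      · rw [mem_perm_seg]
        exact ⟨0, le_refl _, by norm_num, by simp [hββ], by norm_num⟩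
    rcases eq_or_ne (τ₁ - τ₂) 0 with h1 | h1
    · have hττ : τ₁ = τ₂ := by linarith
      refine ⟨(τ₁, 2), ?_, ?_⟩
      · rw [mem_perm_seg]
        exact ⟨1, by norm_num, le_refl _, by norm_num, by norm_num⟩
      · rw [mem_perm_seg]
        exact ⟨1, by norm_num, le_refl _, by simp [hττ], by norm_num⟩
    · have hAB : (β₁ - β₂) * (τ₁ - τ₂) < 0 := lt_of_le_of_ne h (mul_ne_zero h0 h1)
      have hABne : (β₁ - β₂) - (τ₁ - τ₂) ≠ 0 := by
        intro hc
        have hBA : τ₁ - τ₂ = β₁ - β₂ := by linarith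
        rw [hBA] at hAB
        nlinarith [sq_nonneg (β₁ - β₂)]
      set θ : ℝ := (β₁ - β₂) / ((β₁ - β₂) - (τ₁ - τ₂)) with hθdef
      have hmul : θ * ((β₁ - β₂) - (τ₁ - τ₂)) = β₁ - β₂ := div_mul_cancel₀ _ hABne
      have h0' : 0 ≤ θ ∧ θ ≤ 1 := by
        rcases lt_or_gt_of_ne h0 with hA0 | hA0
        · have hB0 : 0 < τ₁ - τ₂ := by nlinarith
          constructor
          · rw [hθdef, div_nonneg_iff]; right; constructor <;> linarith
          · rw [hθdef, div_le_one_iff]; right; right; constructor <;> linarith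
        · have hB0 : τ₁ - τ₂ < 0 := by nlinarith
          constructor
          · rw [hθdef, div_nonneg_iff]; left; constructor <;> linarith
          · rw [hθdef, div_le_one (by linarith)]; linarith
      have hkey : (1 - θ) * (β₁ - β₂) + θ * (τ₁ - τ₂) = 0 := by linear_combination -hmul
      refine ⟨((1 - θ) * β₁ + θ * τ₁, 1 + θ), ?_, ?_⟩
      · rw [mem_perm_seg]; exact ⟨θ, h0'.1, h0'.2, rfl, rfl⟩
      · rw [mem_perm_seg]
        exact ⟨θ, h0'.1, h0'.2, by simp only; linear_combination hkey, rfl⟩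

end Geo

noncomputable section Bridge

def pbot (u : IPSeg) : ℝ := if u.p.2 = 1 then u.p.1 else u.q.1
def ptop (u : IPSeg) : ℝ := if u.p.2 = 1 then u.q.1 else u.p.1
def Kset (u : IPSeg) : Set ℝ := Set.uIcc u.p.1 u.q.1
def cb (c : ℝ) (u : IPSeg) : ℝ := if c = 1 then pbot u else ptop u
def ct (c : ℝ) (u : IPSeg) : ℝ := if c = 1 then ptop u else pbot u

lemma itv_carrier (u : IPSeg) (c : ℝ) (h1 : u.p.2 = c) (hI : u.IsInterval) :
    u.carrier = segment ℝ ((u.p.1, c) : ℝ × ℝ) ((u.q.1, c) : ℝ × ℝ) := by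
  have h2 : u.q.2 = c := by rw [← hI]; exact h1
  have hp' : u.p = ((u.p.1, c) : ℝ × ℝ) := by rw [← h1]
  have hq' : u.q = ((u.q.1, c) : ℝ × ℝ) := by rw [← h2]
  rw [IPSeg.carrier, ← hp', ← hq']

lemma prm_carrier (u : IPSeg) (hP : u.IsPermutation) :
    u.carrier = segment ℝ ((pbot u, 1) : ℝ × ℝ) ((ptop u, 2) : ℝ × ℝ) := by
  rcases u.hp with h1 | h1
  · have h2 : u.q.2 = 2 := by
      rcases u.hq with h | h
      · exact absurd (h1.trans h.symm) hP
      · exact h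
    have hp' : u.p = ((u.p.1, 1) : ℝ × ℝ) := by rw [← h1]
    have hq' : u.q = ((u.q.1, 2) : ℝ × ℝ) := by rw [← h2]
    rw [IPSeg.carrier, pbot, ptop, if_pos h1, if_pos h1, ← hp', ← hq']
  · have hne1 : u.p.2 ≠ 1 := by rw [h1]; norm_num
    have h2 : u.q.2 = 1 := by
      rcases u.hq with h | h
      · exact h
      · exact absurd (h1.trans h.symm) hP
    have hp' : u.p = ((u.p.1, 2) : ℝ × ℝ) := by rw [← h1]
    have hq' : u.q = ((u.q.1, 1) : ℝ × ℝ) := by rw [← h2]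
    rw [IPSeg.carrier, pbot, ptop, if_neg hne1, if_neg hne1, segment_symm, ← hp', ← hq']

lemma itv_itv_inter (u v : IPSeg) (c : ℝ) (hu : u.p.2 = c) (hv : v.p.2 = c)
    (hU : u.IsInterval) (hV : v.IsInterval) :
    (u.carrier ∩ v.carrier).Nonempty ↔ (Kset u ∩ Kset v).Nonempty := by
  rw [itv_carrier u c hu hU, itv_carrier v c hv hV]
  constructor
  · rintro ⟨z, hz1, hz2⟩
    rw [mem_horiz] at hz1 hz2
    exact ⟨z.1, hz1.2, hz2.2⟩
  · rintro ⟨m, hm1, hm2⟩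
    refine ⟨(m, c), ?_, ?_⟩
    · rw [mem_horiz]; exact ⟨rfl, hm1⟩
    · rw [mem_horiz]; exact ⟨rfl, hm2⟩

lemma itv_prm_inter (u v : IPSeg) (c : ℝ) (hc : c = 1 ∨ c = 2) (hu : u.p.2 = c)
    (hU : u.IsInterval) (hV : v.IsPermutation) :
    (u.carrier ∩ v.carrier).Nonempty ↔ cb c v ∈ Kset u := by
  rw [itv_carrier u c hu hU, prm_carrier v hV, horiz_inter_perm c _ _ _ _ hc]
  rw [cb, Kset]

lemma prm_prm_inter (u v : IPSeg) (c : ℝ) (hc : c = 1 ∨ c = 2)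
    (hU : u.IsPermutation) (hV : v.IsPermutation) :
    (u.carrier ∩ v.carrier).Nonempty ↔ (cb c u - cb c v) * (ct c u - ct c v) ≤ 0 := by
  rw [prm_carrier u hU, prm_carrier v hV, perm_inter_perm]
  rcases hc with rfl | rfl
  · simp [cb, ct]
  · have hne : ¬ ((2 : ℝ) = 1) := by norm_num
    rw [cb, ct, if_neg hne, if_neg hne, cb, ct, if_neg hne, if_neg hne, mul_comm]

end Bridge

section Cyc

lemma cycle_adj {n : ℕ} (x y : ZMod n) :
    (CycleGraph n).Adj x y ↔ x ≠ y ∧ (y = x + 1 ∨ x = y + 1) := by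
  rw [CycleGraph, SimpleGraph.fromRel_adj]

lemma adj_succ {n : ℕ} (hn : 4 ≤ n) (x : ZMod n) : (CycleGraph n).Adj x (x + 1) := by
  rw [cycle_adj]
  refine ⟨fun h => ?_, Or.inl rfl⟩
  have h1 : (1 : ZMod n) = 0 := (left_eq_add.mp h)
  rw [show ((1 : ZMod n)) = ((1 : ℕ) : ZMod n) by norm_num,
    ZMod.natCast_eq_zero_iff] at h1
  have := Nat.le_of_dvd one_pos h1
  omega

lemma adj_offset {n : ℕ} (hn : 4 ≤ n) (x : ZMod n) (i : ℕ) :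
    (CycleGraph n).Adj (x + (i : ZMod n)) (x + ((i + 1 : ℕ) : ZMod n)) := by
  push_cast
  rw [← add_assoc]
  exact adj_succ hn _

lemma nonadj {n : ℕ} (hn : 4 ≤ n) (x : ZMod n) (i j : ℕ) (hij : i ≤ j)
    (h2 : 2 ≤ j - i) (h3 : j - i ≤ n - 2) :
    x + (i : ZMod n) ≠ x + (j : ZMod n) ∧
      ¬ (CycleGraph n).Adj (x + (i : ZMod n)) (x + (j : ZMod n)) := by
  have hne : x + (i : ZMod n) ≠ x + (j : ZMod n) := by
    intro h
    have h' : (i : ZMod n) = (j : ZMod n) := by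
      have := add_left_cancel h
      exact this
    rw [ZMod.natCast_eq_natCast_iff] at h'
    have hd := (Nat.modEq_iff_dvd' hij).mp h'
    have := Nat.le_of_dvd (by omega) hd
    omega
  refine ⟨hne, fun hadj => ?_⟩
  rw [cycle_adj] at hadj
  rcases hadj.2 with h | h
  · -- x + j = x + i + 1
    have h' : ((i + 1 : ℕ) : ZMod n) = ((j : ℕ) : ZMod n) := by
      push_cast
      rw [add_assoc] at h
      have := add_left_cancel h.symm
      exact this
    rw [ZMod.natCast_eq_natCast_iff] at h'
    have hd := (Nat.modEq_iff_dvd' (by omega)).mp h'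
    have := Nat.le_of_dvd (by omega) hd
    omega
  · -- x + i = x + j + 1
    have h' : ((i : ℕ) : ZMod n) = ((j + 1 : ℕ) : ZMod n) := by
      push_cast
      rw [add_assoc] at h
      have := add_left_cancel h
      exact this
    rw [ZMod.natCast_eq_natCast_iff] at h'
    have hd := (Nat.modEq_iff_dvd' (by omega)).mp h'
    have := Nat.le_of_dvd (by omega) hd
    omega

/-- walking along a chain of intervals -/
lemma walk_chain (K : ℕ → Set ℝ) (hK : ∀ t, ∃ e f, K t = Set.uIcc e f) :
    ∀ (l : ℕ) (p₀ p₁ : ℝ), (∀ t, t < l → (K t ∩ K (t+1)).Nonempty) →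
    p₀ ∈ K 0 → p₁ ∈ K l → ∀ μ, μ ∈ Set.uIcc p₀ p₁ → ∃ t, t ≤ l ∧ μ ∈ K t := by
  intro l
  induction l with
  | zero =>
    intro p₀ p₁ _ h₀ h₁ μ hμ
    obtain ⟨e, f, hef⟩ := hK 0
    refine ⟨0, le_refl _, ?_⟩
    rw [hef] at h₀ h₁ ⊢
    exact Set.ordConnected_uIcc.uIcc_subset h₀ h₁ hμ
  | succ l ih =>
    intro p₀ p₁ hchain h₀ h₁ μ hμ
    obtain ⟨z₀, hz₀l, hz₀r⟩ := hchain l (by omega)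
    have hsub := Set.uIcc_subset_uIcc_union_uIcc (a := p₀) (b := z₀) (c := p₁)
    rcases hsub hμ with hμ' | hμ'
    · obtain ⟨t, ht, hmem⟩ := ih p₀ z₀ (fun t ht => hchain t (by omega)) h₀ hz₀l μ hμ'
      exact ⟨t, by omega, hmem⟩
    · obtain ⟨e, f, hef⟩ := hK (l+1)
      refine ⟨l+1, le_refl _, ?_⟩
      rw [hef] at hz₀r h₁ ⊢
      exact Set.ordConnected_uIcc.uIcc_subset hz₀r h₁ hμ'

/-- spreading the side of a crossing chain -/
lemma chain_side (b t : ℕ → ℝ) (l : ℕ)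
    (hcross : ∀ i, i < l → (b i - b (i+1)) * (t i - t (i+1)) ≤ 0)
    (B T : ℝ) (hsep : ∀ i, i ≤ l → 0 < (b i - B) * (t i - T))
    (j₀ : ℕ) (hj₀ : j₀ ≤ l) (hb : B < b j₀) :
    ∀ i, i ≤ l → B < b i ∧ T < t i := by
  have hgood₀ : B < b j₀ ∧ T < t j₀ := by
    have := hsep j₀ hj₀
    constructor
    · exact hb
    · nlinarith
  have step : ∀ i, i < l → (B < b i ∧ T < t i) → (B < b (i+1) ∧ T < t (i+1)) := by
    intro i hi hgood
    have hs := hsep (i+1) (by omega)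
    have hc := hcross i hi
    by_contra hcon
    rcases not_and_or.mp hcon with hcb | hct
    · push_neg at hcb
      have hb1 : b (i+1) - B < 0 := by
        rcases lt_or_eq_of_le hcb with h | h
        · linarith
        · rw [h] at hs; nlinarith
      have ht1 : t (i+1) - T < 0 := by nlinarith
      nlinarith [hgood.1, hgood.2]
    · push_neg at hct
      have ht1 : t (i+1) - T < 0 := by
        rcases lt_or_eq_of_le hct with h | h
        · linarith
        · rw [h] at hs; nlinarith
      have hb1 : b (i+1) - B < 0 := by nlinarith
      nlinarith [hgood.1, hgood.2]
  have stepdown : ∀ i, i < l → (B < b (i+1) ∧ T < t (i+1)) → (B < b i ∧ T < t i) := by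
    intro i hi hgood
    have hs := hsep i (by omega)
    have hc := hcross i hi
    by_contra hcon
    rcases not_and_or.mp hcon with hcb | hct
    · push_neg at hcb
      have hb1 : b i - B < 0 := by
        rcases lt_or_eq_of_le hcb with h | h
        · linarith
        · rw [h] at hs; nlinarith
      have ht1 : t i - T < 0 := by nlinarith
      nlinarith [hgood.1, hgood.2]
    · push_neg at hct
      have ht1 : t i - T < 0 := by
        rcases lt_or_eq_of_le hct with h | h
        · linarith
        · rw [h] at hs; nlinarith
      have hb1 : b i - B < 0 := by nlinarith
      nlinarith [hgood.1, hgood.2]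
  have up : ∀ d, j₀ + d ≤ l → (B < b (j₀ + d) ∧ T < t (j₀ + d)) := by
    intro d
    induction d with
    | zero => intro _; exact hgood₀
    | succ d ihd =>
      intro hd
      have := step (j₀ + d) (by omega) (ihd (by omega))
      have heq : j₀ + (d + 1) = (j₀ + d) + 1 := by omega
      rw [heq]
      exact this
  have down : ∀ d, d ≤ j₀ → (B < b (j₀ - d) ∧ T < t (j₀ - d)) := by
    intro d
    induction d with
    | zero => intro _; exact hgood₀
    | succ d ihd =>
      intro hd
      have hprev := ihd (by omega)
      have heq : j₀ - d = (j₀ - (d+1)) + 1 := by omega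
      rw [heq] at hprev
      exact stepdown (j₀ - (d+1)) (by omega) hprev
  intro i hi
  rcases le_or_gt i j₀ with h | h
  · have := down (j₀ - i) (by omega)
    simpa [Nat.sub_sub_self h] using this
  · have := up (i - j₀) (by omega)
    have heq : j₀ + (i - j₀) = i := by omega
    rw [heq] at this
    exact this

/-- find a transition point of a cyclic predicate -/
lemma find_transition {n : ℕ} [NeZero n] (T : ZMod n → Prop) (x y : ZMod n)
    (hx : ¬ T x) (hy : T y) : ∃ v, T v ∧ ¬ T (v - 1) := by
  classical
  have hxy : x ≠ y := fun h => hx (h ▸ hy)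
  have hex : ∃ k : ℕ, 1 ≤ k ∧ T (x + (k : ZMod n)) := by
    refine ⟨(y - x).val, ?_, ?_⟩
    · rcases Nat.eq_zero_or_pos (y - x).val with h | h
      · exfalso
        have : y - x = 0 := (ZMod.val_eq_zero _).mp h
        have : y = x := by
          have := sub_eq_zero.mp this
          exact this
        exact hxy this.symm
      · omega
    · have : x + ((y - x).val : ZMod n) = y := by
        rw [ZMod.natCast_rightInverse (y - x)]
        ring
      rwa [this]
  set k := Nat.find hex with hkdef
  have hk := Nat.find_spec hex
  refine ⟨x + (k : ZMod n), hk.2, ?_⟩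
  have hpred : x + (k : ZMod n) - 1 = x + ((k - 1 : ℕ) : ZMod n) := by
    have h1 : 1 ≤ k := hk.1
    have : ((k - 1 : ℕ) : ZMod n) = (k : ZMod n) - 1 := by
      push_cast [Nat.cast_sub h1]
      ring
    rw [this]
    ring
  rw [hpred]
  rcases Nat.eq_or_lt_of_le hk.1 with h1 | h1
  · have hk0 : k - 1 = 0 := by omega
    rw [hk0]
    simpa using hx
  · intro hT
    have := Nat.find_min hex (m := k - 1) (by omega)
    push_neg at this
    exact absurd hT (by simpa using this (by omega))

end Cyc


lemma gap_point_Icc (a₁ b₁ a₂ b₂ p₁ p₀ : ℝ) (h : Set.Icc a₁ b₁ ∩ Set.Icc a₂ b₂ = ∅)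
    (hp₁ : p₁ ∈ Set.Icc a₁ b₁) (hp₀ : p₀ ∈ Set.Icc a₂ b₂) :
    ∃ m, m ∉ Set.Icc a₁ b₁ ∧ m ∉ Set.Icc a₂ b₂ ∧ m ∈ Set.uIcc p₀ p₁ := by
  obtain ⟨hp₁a, hp₁b⟩ := hp₁
  obtain ⟨hp₀a, hp₀b⟩ := hp₀
  have hd : b₁ < a₂ ∨ b₂ < a₁ := by
    by_contra hcon
    push_neg at hcon
    have hmem : max a₁ a₂ ∈ Set.Icc a₁ b₁ ∩ Set.Icc a₂ b₂ := by
      constructor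
      · exact ⟨le_max_left _ _, max_le (by linarith) hcon.1⟩
      · exact ⟨le_max_right _ _, max_le hcon.2 (by linarith)⟩
    rw [h] at hmem
    exact Set.notMem_empty _ hmem
  rcases hd with hd | hd
  · refine ⟨(b₁ + a₂) / 2, ?_, ?_, ?_⟩
    · rw [Set.mem_Icc]; push_neg; intro; linarith
    · rw [Set.mem_Icc]; push_neg; intro; linarith
    · rw [Set.mem_uIcc]; right; constructor <;> linarith
  · refine ⟨(b₂ + a₁) / 2, ?_, ?_, ?_⟩
    · rw [Set.mem_Icc]; push_neg; intro; linarith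
    · rw [Set.mem_Icc]; push_neg; intro; linarith
    · rw [Set.mem_uIcc]; left; constructor <;> linarith

lemma gap_point (e₁ f₁ e₂ f₂ p₁ p₀ : ℝ) (h : Set.uIcc e₁ f₁ ∩ Set.uIcc e₂ f₂ = ∅)
    (hp₁ : p₁ ∈ Set.uIcc e₁ f₁) (hp₀ : p₀ ∈ Set.uIcc e₂ f₂) :
    ∃ m, m ∉ Set.uIcc e₁ f₁ ∧ m ∉ Set.uIcc e₂ f₂ ∧ m ∈ Set.uIcc p₀ p₁ := by
  have h1 : Set.uIcc e₁ f₁ = Set.Icc (min e₁ f₁) (max e₁ f₁) := rfl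
  have h2 : Set.uIcc e₂ f₂ = Set.Icc (min e₂ f₂) (max e₂ f₂) := rfl
  rw [h1, h2] at *
  exact gap_point_Icc _ _ _ _ _ _ h hp₁ hp₀


lemma exists_perm (n : ℕ) (hn : 4 ≤ n) (s : ZMod n → IPSeg)
    (hmod : IsIPSEGModel (CycleGraph n) s) (c : ℝ) (hc : c = 1 ∨ c = 2)
    (hstar : ∀ v, (s v).IsInterval → (s v).p.2 = c) :
    ∃ w, (s w).IsPermutation := by
  classical
  haveI : NeZero n := ⟨by omega⟩
  by_contra hnp
  push_neg at hnp
  have hall : ∀ w, (s w).IsInterval := fun w => not_ne_iff.mp (hnp w)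
  set x : ZMod n := 0 with hxdef
  have MF1 : ∀ i j : ℕ, i ≤ j → 2 ≤ j - i → j - i ≤ n - 2 →
      (Kset (s (x + (i : ZMod n))) ∩ Kset (s (x + (j : ZMod n)))) = ∅ := by
    intro i j h1 h2 h3
    obtain ⟨hneq, hnadj⟩ := nonadj hn x i j h1 h2 h3
    rw [← Set.not_nonempty_iff_eq_empty]
    intro hne
    exact hnadj ((hmod _ _ hneq).mpr
      ((itv_itv_inter _ _ c (hstar _ (hall _)) (hstar _ (hall _)) (hall _) (hall _)).mpr hne))
  have MB : ∀ i : ℕ,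
      (Kset (s (x + (i : ZMod n))) ∩ Kset (s (x + ((i + 1 : ℕ) : ZMod n)))).Nonempty := by
    intro i
    have hadj := adj_offset hn x i
    exact (itv_itv_inter _ _ c (hstar _ (hall _)) (hstar _ (hall _)) (hall _) (hall _)).mp
      ((hmod _ _ hadj.ne).mp hadj)
  obtain ⟨pa, hpa1, hpa2⟩ := MB 1
  obtain ⟨pb, hpb0, hpb1⟩ := MB 0
  have hdisj := MF1 0 2 (by omega) (by omega) (by omega)
  obtain ⟨m, hm1, hm2, hm3⟩ := gap_point _ _ _ _ pb pa hdisj hpb0 hpa2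
  have hm4 : m ∈ Kset (s (x + ((1 : ℕ) : ZMod n))) :=
    Set.ordConnected_uIcc.uIcc_subset hpa1 hpb1 hm3
  have hcast : ((2 + (n - 2) : ℕ) : ZMod n) = ((0 : ℕ) : ZMod n) := by
    have h : 2 + (n - 2) = n := by omega
    rw [h]
    simp
  have hpb' : pb ∈ Kset (s (x + ((2 + (n - 2) : ℕ) : ZMod n))) := by
    rw [hcast]; exact hpb0
  obtain ⟨t, htl, htm⟩ := walk_chain (fun t => Kset (s (x + ((2 + t : ℕ) : ZMod n))))
    (fun t => ⟨_, _, rfl⟩) (n - 2) pa pb (fun t ht => MB (2 + t)) hpa2 hpb' m hm3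
  rcases Nat.eq_zero_or_pos t with ht0 | ht1
  · subst ht0
    exact hm2 htm
  rcases Nat.eq_or_lt_of_le htl with htn | htn
  · rw [htn, hcast] at htm
    exact hm1 htm
  · have hdisj2 := MF1 1 (2 + t) (by omega) (by omega) (by omega)
    exact Set.eq_empty_iff_forall_notMem.mp hdisj2 m ⟨hm4, htm⟩

lemma perm_two (n : ℕ) (hn : 4 ≤ n) (s : ZMod n → IPSeg) (v v' : ZMod n)
    (h : PermArcStart n s v) (h' : PermArcStart n s v') (hne : v ≠ v') :
    ∃ u u' : ZMod n, IntArcStart n s u ∧ IntArcStart n s u' ∧ u ≠ u' := by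
  classical
  haveI : NeZero n := ⟨by omega⟩
  -- basic transition finder producing an IntArcStart within a window
  have finder : ∀ (z : ZMod n) (e : ℕ), (s z).IsPermutation → 1 ≤ e →
      (s (z + (e : ZMod n))).IsInterval →
      ∃ k : ℕ, 1 ≤ k ∧ k ≤ e ∧ IntArcStart n s (z + (k : ZMod n)) := by
    intro z e hz he hze
    have hex : ∃ k : ℕ, 1 ≤ k ∧ (s (z + (k : ZMod n))).IsInterval := ⟨e, he, hze⟩
    set k := Nat.find hex with hkdef
    obtain ⟨hk1, hk2⟩ := Nat.find_spec hex
    have hkmin : ∀ j, j < k → ¬ (1 ≤ j ∧ (s (z + (j : ZMod n))).IsInterval) :=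
      fun j hj => Nat.find_min hex hj
    have hkle : k ≤ e := by
      by_contra hcon
      exact hkmin e (by omega) ⟨he, hze⟩
    refine ⟨k, hk1, hkle, hk2, ?_⟩
    have hpred : z + (k : ZMod n) - 1 = z + ((k - 1 : ℕ) : ZMod n) := by
      push_cast [Nat.cast_sub (show 1 ≤ k from hk1)]
      ring
    rw [hpred]
    rcases Nat.eq_or_lt_of_le hk1 with h1 | h1
    · have hk0 : k - 1 = 0 := by omega
      rw [hk0]
      simpa using (show ¬ (s z).IsInterval from hz)
    · intro hI
      exact hkmin (k - 1) (by omega) ⟨by omega, hI⟩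
  -- distances
  have hvv : v' - v ≠ 0 := sub_ne_zero.mpr (Ne.symm hne)
  have hvv' : v - v' ≠ 0 := sub_ne_zero.mpr hne
  set d := (v' - v).val with hd
  set d' := (v - v').val with hd'
  have hsum : d + d' = n := by
    have h1 : v - v' = -(v' - v) := by ring
    rw [hd', h1, ZMod.neg_val, if_neg hvv]
    have := ZMod.val_lt (v' - v)
    have h0 : (v' - v).val ≠ 0 := fun h => hvv ((ZMod.val_eq_zero _).mp h)
    omega
  have hd1 : 1 ≤ d := by
    have h0 : (v' - v).val ≠ 0 := fun h => hvv ((ZMod.val_eq_zero _).mp h)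
    omega
  have hd'1 : 1 ≤ d' := by
    have h0 : (v - v').val ≠ 0 := fun h => hvv' ((ZMod.val_eq_zero _).mp h)
    omega
  have hveq : v + (d : ZMod n) = v' := by
    rw [hd, ZMod.natCast_rightInverse (v' - v)]
    ring
  have hveq' : v' + (d' : ZMod n) = v := by
    rw [hd', ZMod.natCast_rightInverse (v - v')]
    ring
  -- interval vertices before each start
  have hIv' : (s (v' - 1)).IsInterval := not_ne_iff.mp h'.2
  have hIv : (s (v - 1)).IsInterval := not_ne_iff.mp h.2
  have hd2 : 2 ≤ d := by
    rcases Nat.eq_or_lt_of_le hd1 with h1 | h1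
    · exfalso
      have : v' - 1 = v := by
        rw [← hveq, ← h1]
        push_cast
        ring
      rw [this] at hIv'
      exact h.1 hIv'
    · omega
  have hd'2 : 2 ≤ d' := by
    rcases Nat.eq_or_lt_of_le hd'1 with h1 | h1
    · exfalso
      have : v - 1 = v' := by
        rw [← hveq', ← h1]
        push_cast
        ring
      rw [this] at hIv
      exact h'.1 hIv
    · omega
  have hIoff : (s (v + ((d - 1 : ℕ) : ZMod n))).IsInterval := by
    have : v + ((d - 1 : ℕ) : ZMod n) = v' - 1 := by
      rw [← hveq]
      push_cast [Nat.cast_sub hd1]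
      ring
    rw [this]
    exact hIv'
  have hIoff' : (s (v' + ((d' - 1 : ℕ) : ZMod n))).IsInterval := by
    have : v' + ((d' - 1 : ℕ) : ZMod n) = v - 1 := by
      rw [← hveq']
      push_cast [Nat.cast_sub hd'1]
      ring
    rw [this]
    exact hIv
  obtain ⟨k, hk1, hkle, hkS⟩ := finder v (d - 1) h.1 (by omega) hIoff
  obtain ⟨k', hk'1, hk'le, hk'S⟩ := finder v' (d' - 1) h'.1 (by omega) hIoff'
  refine ⟨v + (k : ZMod n), v' + (k' : ZMod n), hkS, hk'S, ?_⟩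
  intro heq
  have heq2 : v + (k : ZMod n) = v + ((d + k' : ℕ) : ZMod n) := by
    rw [heq, ← hveq]
    push_cast
    ring
  have h3 : ((k : ℕ) : ZMod n) = ((d + k' : ℕ) : ZMod n) := add_left_cancel heq2
  rw [ZMod.natCast_eq_natCast_iff] at h3
  have hdd := (Nat.modEq_iff_dvd' (by omega)).mp h3
  have := Nat.le_of_dvd (by omega) hdd
  omega

lemma two_starts_false (n : ℕ) (hn : 4 ≤ n) (s : ZMod n → IPSeg)
    (hmod : IsIPSEGModel (CycleGraph n) s) (c : ℝ) (hc : c = 1 ∨ c = 2)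
    (hstar : ∀ v, (s v).IsInterval → (s v).p.2 = c)
    (v v' : ZMod n) (hv : IntArcStart n s v) (hv' : IntArcStart n s v') (hne : v ≠ v') :
    False := by
  classical
  haveI : NeZero n := ⟨by omega⟩
  have hPv1 : (s (v - 1)).IsPermutation := hv.2
  -- model facts
  have MF1 : ∀ x y : ZMod n, x ≠ y → (s x).IsInterval → (s y).IsInterval →
      ((CycleGraph n).Adj x y ↔ (Kset (s x) ∩ Kset (s y)).Nonempty) := by
    intro x y hne hx hy
    rw [hmod x y hne]
    exact itv_itv_inter _ _ c (hstar _ hx) (hstar _ hy) hx hy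
  have MF2 : ∀ x y : ZMod n, x ≠ y → (s x).IsInterval → (s y).IsPermutation →
      ((CycleGraph n).Adj x y ↔ cb c (s y) ∈ Kset (s x)) := by
    intro x y hne hx hy
    rw [hmod x y hne]
    exact itv_prm_inter _ _ c hc (hstar _ hx) hx hy
  have MF3 : ∀ x y : ZMod n, x ≠ y → (s x).IsPermutation → (s y).IsPermutation →
      ((CycleGraph n).Adj x y ↔
        (cb c (s x) - cb c (s y)) * (ct c (s x) - ct c (s y)) ≤ 0) := by
    intro x y hne hx hy
    rw [hmod x y hne]
    exact prm_prm_inter _ _ c hc hx hy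
  -- the permutation vertex with maximal bottom coordinate
  obtain ⟨w, hwmem, hwmax⟩ := Finset.exists_max_image
    (Finset.univ.filter (fun z : ZMod n => (s z).IsPermutation)) (fun z => cb c (s z))
    ⟨v - 1, Finset.mem_filter.mpr ⟨Finset.mem_univ _, hPv1⟩⟩
  have hPw : (s w).IsPermutation := (Finset.mem_filter.mp hwmem).2
  have hmax : ∀ z : ZMod n, (s z).IsPermutation → cb c (s z) ≤ cb c (s w) :=
    fun z hz => hwmax z (Finset.mem_filter.mpr ⟨Finset.mem_univ _, hz⟩)
  -- k₁ : first interval forward from w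
  have hvne : v ≠ w := fun h => hPw (h ▸ hv.1)
  have hwit1 : 1 ≤ (v - w).val ∧ (s (w + (((v - w).val : ℕ) : ZMod n))).IsInterval := by
    constructor
    · have h0 : (v - w).val ≠ 0 := by
        intro h0
        exact hvne (sub_eq_zero.mp ((ZMod.val_eq_zero _).mp h0))
      omega
    · have hh : w + (((v - w).val : ℕ) : ZMod n) = v := by
        rw [ZMod.natCast_rightInverse (v - w)]
        ring
      rw [hh]
      exact hv.1
  have hex1 : ∃ k : ℕ, 1 ≤ k ∧ (s (w + (k : ZMod n))).IsInterval := ⟨_, hwit1⟩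
  set k₁ := Nat.find hex1 with hk₁def
  obtain ⟨hk₁1, hk₁I⟩ := Nat.find_spec hex1
  have hk₁min : ∀ j, j < k₁ → ¬ (1 ≤ j ∧ (s (w + (j : ZMod n))).IsInterval) :=
    fun j hj => Nat.find_min hex1 hj
  have hk₁lt : k₁ < n := lt_of_le_of_lt (Nat.find_min' hex1 hwit1) (ZMod.val_lt _)
  have hPfwd : ∀ j : ℕ, 1 ≤ j → j < k₁ → (s (w + (j : ZMod n))).IsPermutation := by
    intro j h1 h2
    by_contra hcon
    exact hk₁min j h2 ⟨h1, not_ne_iff.mp hcon⟩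
  -- k₂ : first interval backward from w
  have hwne : w ≠ v := fun h => hvne h.symm
  have hwit2 : 1 ≤ (w - v).val ∧ (s (w - (((w - v).val : ℕ) : ZMod n))).IsInterval := by
    constructor
    · have h0 : (w - v).val ≠ 0 := by
        intro h0
        exact hwne (sub_eq_zero.mp ((ZMod.val_eq_zero _).mp h0))
      omega
    · have hh : w - (((w - v).val : ℕ) : ZMod n) = v := by
        rw [ZMod.natCast_rightInverse (w - v)]
        ring
      rw [hh]
      exact hv.1
  have hex2 : ∃ k : ℕ, 1 ≤ k ∧ (s (w - (k : ZMod n))).IsInterval := ⟨_, hwit2⟩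
  set k₂ := Nat.find hex2 with hk₂def
  obtain ⟨hk₂1, hk₂I⟩ := Nat.find_spec hex2
  have hk₂min : ∀ j, j < k₂ → ¬ (1 ≤ j ∧ (s (w - (j : ZMod n))).IsInterval) :=
    fun j hj => Nat.find_min hex2 hj
  have hk₂lt : k₂ < n := lt_of_le_of_lt (Nat.find_min' hex2 hwit2) (ZMod.val_lt _)
  have hPbwd : ∀ j : ℕ, 1 ≤ j → j < k₂ → (s (w - (j : ZMod n))).IsPermutation := by
    intro j h1 h2
    by_contra hcon
    exact hk₂min j h2 ⟨h1, not_ne_iff.mp hcon⟩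
  -- k₃ : first permutation after the forward interval block
  have hwit3 : k₁ < n ∧ (s (w + ((n : ℕ) : ZMod n))).IsPermutation := by
    refine ⟨hk₁lt, ?_⟩
    rw [ZMod.natCast_self, add_zero]
    exact hPw
  have hex3 : ∃ k : ℕ, k₁ < k ∧ (s (w + (k : ZMod n))).IsPermutation := ⟨n, hwit3⟩
  set k₃ := Nat.find hex3 with hk₃def
  obtain ⟨hk₃gt, hk₃P⟩ := Nat.find_spec hex3
  have hk₃min : ∀ j, j < k₃ → ¬ (k₁ < j ∧ (s (w + (j : ZMod n))).IsPermutation) :=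
    fun j hj => Nat.find_min hex3 hj
  have hk₃le : k₃ ≤ n := Nat.find_min' hex3 hwit3
  have hIfwd : ∀ j : ℕ, k₁ ≤ j → j < k₃ → (s (w + (j : ZMod n))).IsInterval := by
    intro j h1 h2
    rcases Nat.eq_or_lt_of_le h1 with he | hlt
    · rw [← he]
      exact hk₁I
    · by_contra hcon
      exact hk₃min j h2 ⟨hlt, hcon⟩
  -- k₄ : first permutation after the backward interval block
  have hwit4 : k₂ < n ∧ (s (w - ((n : ℕ) : ZMod n))).IsPermutation := by
    refine ⟨hk₂lt, ?_⟩
    rw [ZMod.natCast_self, sub_zero]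
    exact hPw
  have hex4 : ∃ k : ℕ, k₂ < k ∧ (s (w - (k : ZMod n))).IsPermutation := ⟨n, hwit4⟩
  set k₄ := Nat.find hex4 with hk₄def
  obtain ⟨hk₄gt, hk₄P⟩ := Nat.find_spec hex4
  have hk₄min : ∀ j, j < k₄ → ¬ (k₂ < j ∧ (s (w - (j : ZMod n))).IsPermutation) :=
    fun j hj => Nat.find_min hex4 hj
  have hk₄le : k₄ ≤ n := Nat.find_min' hex4 hwit4
  have hIbwd : ∀ j : ℕ, k₂ ≤ j → j < k₄ → (s (w - (j : ZMod n))).IsInterval := by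
    intro j h1 h2
    rcases Nat.eq_or_lt_of_le h1 with he | hlt
    · rw [← he]
      exact hk₂I
    · by_contra hcon
      exact hk₄min j h2 ⟨hlt, hcon⟩
  -- conversion between forward and backward offsets
  have hconv : ∀ i : ℕ, i ≤ n → w + (i : ZMod n) = w - ((n - i : ℕ) : ZMod n) := by
    intro i hi
    have hni : ((i : ℕ) : ZMod n) + ((n - i : ℕ) : ZMod n) = 0 := by
      rw [← Nat.cast_add]
      have hh : i + (n - i) = n := by omega
      rw [hh, ZMod.natCast_self]
    have hneg : ((n - i : ℕ) : ZMod n) = -((i : ℕ) : ZMod n) :=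
      (neg_eq_of_add_eq_zero_right hni).symm
    rw [hneg]
    ring
  -- if the two blocks wrap all the way around, the interval arc start is unique
  have hbound : k₃ + k₄ ≤ n := by
    by_contra hcon
    push_neg at hcon
    have hallI : ∀ i : ℕ, k₁ ≤ i → i ≤ n - k₂ → (s (w + (i : ZMod n))).IsInterval := by
      intro i hA hB
      rcases Nat.lt_or_ge i k₃ with hi | hi
      · exact hIfwd i hA hi
      · rw [hconv i (by omega)]
        exact hIbwd (n - i) (by omega) (by omega)
    have huniq : ∀ z : ZMod n, IntArcStart n s z → z = w + (k₁ : ZMod n) := by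
      intro z hz
      have hzw : z = w + (((z - w).val : ℕ) : ZMod n) := by
        rw [ZMod.natCast_rightInverse (z - w)]
        ring
      set j := (z - w).val with hjdef
      have hjlt : j < n := ZMod.val_lt _
      have hj0 : j ≠ 0 := by
        intro h0
        rw [h0] at hzw
        push_cast at hzw
        rw [add_zero] at hzw
        exact hPw (hzw ▸ hz.1)
      have hjk₁ : k₁ ≤ j := by
        by_contra hcon2
        exact hPfwd j (by omega) (by omega) (by rw [← hzw]; exact hz.1)
      have hjk₂ : j ≤ n - k₂ := by
        by_contra hcon2
        push_neg at hcon2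
        have hP := hPbwd (n - j) (by omega) (by omega)
        rw [← hconv j (by omega)] at hP
        exact hP (by rw [← hzw]; exact hz.1)
      rcases Nat.eq_or_lt_of_le hjk₁ with he | hlt
      · rw [hzw, ← he]
      · exfalso
        apply hz.2
        have hpred : z - 1 = w + ((j - 1 : ℕ) : ZMod n) := by
          rw [hzw]
          push_cast [Nat.cast_sub (by omega : 1 ≤ j)]
          ring
        rw [hpred]
        exact hallI (j - 1) (by omega) (by omega)
    exact hne (by rw [huniq v hv, huniq v' hv'])
  -- set up offsets from the base point x
  set x : ZMod n := w - ((k₄ : ℕ) : ZMod n) with hxdef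
  set a := k₄ - k₂ with hadef
  set b := k₄ + k₁ - 1 with hbdef
  set d := k₄ + k₃ - 1 with hddef
  have hVle : ∀ j : ℕ, j ≤ k₄ → x + (j : ZMod n) = w - ((k₄ - j : ℕ) : ZMod n) := by
    intro j hj
    rw [hxdef]
    push_cast [Nat.cast_sub hj]
    ring
  have hVge : ∀ j : ℕ, k₄ ≤ j → x + (j : ZMod n) = w + ((j - k₄ : ℕ) : ZMod n) := by
    intro j hj
    rw [hxdef]
    push_cast [Nat.cast_sub hj]
    ring
  have hPV0 : (s (x + ((0 : ℕ) : ZMod n))).IsPermutation := by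
    rw [hVle 0 (by omega)]
    simpa using hk₄P
  have hIA : ∀ j : ℕ, 1 ≤ j → j ≤ a → (s (x + (j : ZMod n))).IsInterval := by
    intro j h1 h2
    rw [hVle j (by omega)]
    exact hIbwd (k₄ - j) (by omega) (by omega)
  have hPM : ∀ j : ℕ, a + 1 ≤ j → j ≤ b → (s (x + (j : ZMod n))).IsPermutation := by
    intro j h1 h2
    rcases Nat.lt_or_ge j k₄ with hj | hj
    · rw [hVle j (by omega)]
      exact hPbwd (k₄ - j) (by omega) (by omega)
    · rcases Nat.eq_or_lt_of_le hj with he | hlt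
      · rw [hVge j hj]
        have hh : j - k₄ = 0 := by omega
        rw [hh]
        push_cast
        rw [add_zero]
        exact hPw
      · rw [hVge j hj]
        exact hPfwd (j - k₄) (by omega) (by omega)
  have hIB : ∀ j : ℕ, b + 1 ≤ j → j ≤ d → (s (x + (j : ZMod n))).IsInterval := by
    intro j h1 h2
    rw [hVge j (by omega)]
    exact hIfwd (j - k₄) (by omega) (by omega)
  have hPd1 : (s (x + ((d + 1 : ℕ) : ZMod n))).IsPermutation := by
    rw [hVge (d + 1) (by omega)]
    have hh : d + 1 - k₄ = k₃ := by omega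
    rw [hh]
    exact hk₃P
  have hwx : w = x + ((k₄ : ℕ) : ZMod n) := by
    rw [hVle k₄ le_rfl]
    have hh : k₄ - k₄ = 0 := by omega
    rw [hh]
    push_cast
    rw [sub_zero]
  -- the chain-side machinery
  have sidefun : ∀ B T : ℝ,
      (∀ j : ℕ, a + 1 ≤ j → j ≤ b →
        0 < (cb c (s (x + (j : ZMod n))) - B) * (ct c (s (x + (j : ZMod n))) - T)) →
      B < cb c (s (x + ((k₄ : ℕ) : ZMod n))) →
      ∀ j : ℕ, a + 1 ≤ j → j ≤ b → B < cb c (s (x + (j : ZMod n))) := by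
    intro B T hsep hB j hj1 hj2
    have hcross : ∀ i : ℕ, i < b - (a + 1) →
        (cb c (s (x + ((a + 1 + i : ℕ) : ZMod n))) -
          cb c (s (x + ((a + 1 + (i + 1) : ℕ) : ZMod n)))) *
        (ct c (s (x + ((a + 1 + i : ℕ) : ZMod n))) -
          ct c (s (x + ((a + 1 + (i + 1) : ℕ) : ZMod n)))) ≤ 0 := by
      intro i hi
      have hadj := adj_offset hn x (a + 1 + i)
      exact (MF3 _ _ hadj.ne (hPM _ (by omega) (by omega))
        (hPM _ (by omega) (by omega))).mp hadj
    have hmain := chain_side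
      (fun i => cb c (s (x + ((a + 1 + i : ℕ) : ZMod n))))
      (fun i => ct c (s (x + ((a + 1 + i : ℕ) : ZMod n))))
      (b - (a + 1)) hcross B T
      (fun i hi => hsep (a + 1 + i) (by omega) (by omega))
      (k₄ - (a + 1)) (by omega)
      (by
        show B < cb c (s (x + ((a + 1 + (k₄ - (a + 1)) : ℕ) : ZMod n)))
        have hh : a + 1 + (k₄ - (a + 1)) = k₄ := by omega
        rw [hh]
        exact hB)
    have hres := hmain (j - (a + 1)) (by omega)
    beta_reduce at hres
    have hjj : a + 1 + (j - (a + 1)) = j := by omega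
    rw [hjj] at hres
    exact hres.1
  -- separation of the outer permutation segments from the middle block
  have hsep0 : ∀ j : ℕ, a + 1 ≤ j → j ≤ b →
      0 < (cb c (s (x + (j : ZMod n))) - cb c (s (x + ((0 : ℕ) : ZMod n)))) *
          (ct c (s (x + (j : ZMod n))) - ct c (s (x + ((0 : ℕ) : ZMod n)))) := by
    intro j h1 h2
    obtain ⟨hneq, hnadj⟩ := nonadj hn x 0 j (by omega) (by omega) (by omega)
    have hmf := MF3 _ _ hneq hPV0 (hPM j h1 h2)
    have hgt : 0 < (cb c (s (x + ((0 : ℕ) : ZMod n))) - cb c (s (x + (j : ZMod n)))) *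
        (ct c (s (x + ((0 : ℕ) : ZMod n))) - ct c (s (x + (j : ZMod n)))) := by
      by_contra hcon
      push_neg at hcon
      exact hnadj (hmf.mpr hcon)
    nlinarith [hgt]
  have hsepd : ∀ j : ℕ, a + 1 ≤ j → j ≤ b →
      0 < (cb c (s (x + (j : ZMod n))) - cb c (s (x + ((d + 1 : ℕ) : ZMod n)))) *
          (ct c (s (x + (j : ZMod n))) - ct c (s (x + ((d + 1 : ℕ) : ZMod n)))) := by
    intro j h1 h2
    obtain ⟨hneq, hnadj⟩ := nonadj hn x j (d + 1) (by omega) (by omega) (by omega)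
    have hmf := MF3 _ _ hneq (hPM j h1 h2) hPd1
    by_contra hcon
    push_neg at hcon
    exact hnadj (hmf.mpr hcon)
  -- the maximal vertex is strictly above both outer segments
  have hB0lt : cb c (s (x + ((0 : ℕ) : ZMod n))) < cb c (s (x + ((k₄ : ℕ) : ZMod n))) := by
    have hle := hmax _ hPV0
    rw [hwx] at hle
    rcases lt_or_eq_of_le hle with h | h
    · exact h
    · exfalso
      have hK := hsep0 k₄ (by omega) (by omega)
      rw [← h] at hK
      simp at hK
  have hBdlt : cb c (s (x + ((d + 1 : ℕ) : ZMod n))) < cb c (s (x + ((k₄ : ℕ) : ZMod n))) := by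
    have hle := hmax _ hPd1
    rw [hwx] at hle
    rcases lt_or_eq_of_le hle with h | h
    · exact h
    · exfalso
      have hK := hsepd k₄ (by omega) (by omega)
      rw [h] at hK
      simp at hK
  have hside0 := sidefun _ _ hsep0 hB0lt
  have hsided := sidefun _ _ hsepd hBdlt
  -- anchor points
  have hadj_a := adj_offset hn x a
  have hα : cb c (s (x + ((a + 1 : ℕ) : ZMod n))) ∈ Kset (s (x + ((a : ℕ) : ZMod n))) :=
    (MF2 _ _ hadj_a.ne (hIA a (by omega) le_rfl) (hPM (a + 1) le_rfl (by omega))).mp hadj_a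
  have hadj_b := adj_offset hn x b
  have hδ : cb c (s (x + ((b : ℕ) : ZMod n))) ∈ Kset (s (x + ((b + 1 : ℕ) : ZMod n))) :=
    (MF2 _ _ hadj_b.ne.symm (hIB (b + 1) le_rfl (by omega))
      (hPM b (by omega) le_rfl)).mp hadj_b.symm
  have hadj_0 := adj_offset hn x 0
  have hz0 : cb c (s (x + ((0 : ℕ) : ZMod n))) ∈ Kset (s (x + ((1 : ℕ) : ZMod n))) :=
    (MF2 _ _ hadj_0.ne.symm (hIA 1 le_rfl (by omega)) hPV0).mp hadj_0.symm
  have hadj_d := adj_offset hn x d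
  have hzd : cb c (s (x + ((d + 1 : ℕ) : ZMod n))) ∈ Kset (s (x + ((d : ℕ) : ZMod n))) :=
    (MF2 _ _ hadj_d.ne (hIB d (by omega) le_rfl) hPd1).mp hadj_d
  -- μ
  have h0α := hside0 (a + 1) le_rfl (by omega)
  have h0δ := hside0 b (by omega) le_rfl
  have hdα := hsided (a + 1) le_rfl (by omega)
  have hdδ := hsided b (by omega) le_rfl
  set μ := min (cb c (s (x + ((a + 1 : ℕ) : ZMod n)))) (cb c (s (x + ((b : ℕ) : ZMod n)))) with hμdef
  have h0μ : cb c (s (x + ((0 : ℕ) : ZMod n))) < μ := lt_min h0α h0δ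
  have hdμ : cb c (s (x + ((d + 1 : ℕ) : ZMod n))) < μ := lt_min hdα hdδ
  -- walk along the first interval block
  have hchain1 : ∀ t : ℕ, t < a - 1 →
      (Kset (s (x + ((1 + t : ℕ) : ZMod n))) ∩
        Kset (s (x + ((1 + t + 1 : ℕ) : ZMod n)))).Nonempty := by
    intro t ht
    have hadj := adj_offset hn x (1 + t)
    exact (MF1 _ _ hadj.ne (hIA (1 + t) (by omega) (by omega))
      (hIA (1 + t + 1) (by omega) (by omega))).mp hadj
  have hmem_a : cb c (s (x + ((a + 1 : ℕ) : ZMod n)))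
      ∈ Kset (s (x + ((1 + (a - 1) : ℕ) : ZMod n))) := by
    have hh : 1 + (a - 1) = a := by omega
    rw [hh]
    exact hα
  have hmuI1 : μ ∈ Set.uIcc (cb c (s (x + ((0 : ℕ) : ZMod n))))
      (cb c (s (x + ((a + 1 : ℕ) : ZMod n)))) :=
    Set.mem_uIcc.mpr (Or.inl ⟨le_of_lt h0μ, min_le_left _ _⟩)
  obtain ⟨t1, ht1l, ht1m⟩ := walk_chain (fun t => Kset (s (x + ((1 + t : ℕ) : ZMod n))))
    (fun t => ⟨_, _, rfl⟩) (a - 1) _ _ hchain1 hz0 hmem_a μ hmuI1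
  -- walk along the second interval block (backwards)
  have hchain2 : ∀ t : ℕ, t < d - (b + 1) →
      (Kset (s (x + ((d - t : ℕ) : ZMod n))) ∩
        Kset (s (x + ((d - (t + 1) : ℕ) : ZMod n)))).Nonempty := by
    intro t ht
    have hadj := adj_offset hn x (d - (t + 1))
    have hco : d - (t + 1) + 1 = d - t := by omega
    rw [hco] at hadj
    obtain ⟨m', hm'1, hm'2⟩ := (MF1 _ _ hadj.ne (hIB (d - (t + 1)) (by omega) (by omega))
      (hIB (d - t) (by omega) (by omega))).mp hadj
    exact ⟨m', hm'2, hm'1⟩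
  have hmem_b1 : cb c (s (x + ((b : ℕ) : ZMod n)))
      ∈ Kset (s (x + ((d - (d - (b + 1)) : ℕ) : ZMod n))) := by
    have hh : d - (d - (b + 1)) = b + 1 := by omega
    rw [hh]
    exact hδ
  have hmuI2 : μ ∈ Set.uIcc (cb c (s (x + ((d + 1 : ℕ) : ZMod n))))
      (cb c (s (x + ((b : ℕ) : ZMod n)))) :=
    Set.mem_uIcc.mpr (Or.inl ⟨le_of_lt hdμ, min_le_right _ _⟩)
  obtain ⟨t2, ht2l, ht2m⟩ := walk_chain (fun t => Kset (s (x + ((d - t : ℕ) : ZMod n))))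
    (fun t => ⟨_, _, rfl⟩) (d - (b + 1)) _ _ hchain2 hzd hmem_b1 μ hmuI2
  -- the two interval blocks are non-adjacent, contradiction
  obtain ⟨hneq, hnadj⟩ := nonadj hn x (1 + t1) (d - t2) (by omega) (by omega) (by omega)
  exact hnadj ((MF1 _ _ hneq (hIA (1 + t1) (by omega) (by omega))
    (hIB (d - t2) (by omega) (by omega))).mpr ⟨μ, ht1m, ht2m⟩)

/-- Every IP-SEG* model of a chordless cycle `C_n` (`n ≥ 4`) containing at least one
interval segment has exactly one interval arc, and hence exactly one permutation arc. -/
theorem ipsegstar_cycle_one_interval_arc (n : ℕ) (hn : 4 ≤ n)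
    (s : ZMod n → IPSeg) (hm : IsIPSEGStarModel (CycleGraph n) s)
    (hint : ∃ v : ZMod n, (s v).IsInterval) :
    (∃! v : ZMod n, IntArcStart n s v) ∧ (∃! v : ZMod n, PermArcStart n s v) := by
  classical
  haveI : NeZero n := ⟨by omega⟩
  obtain ⟨hmod, c, hc, hstar⟩ := hm
  obtain ⟨w₀, hw₀⟩ := exists_perm n hn s hmod c hc hstar
  obtain ⟨vI, hvI⟩ := hint
  obtain ⟨vS, hvS⟩ := find_transition (n := n) (fun z => (s z).IsInterval) w₀ vI hw₀ hvI
  obtain ⟨pS, hpS⟩ :=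
    find_transition (n := n) (fun z => (s z).IsPermutation) vI w₀ (fun h => h hvI) hw₀
  constructor
  · refine ⟨vS, hvS, fun y hy => ?_⟩
    by_contra hney
    exact two_starts_false n hn s hmod c hc hstar y vS hy hvS hney
  · refine ⟨pS, hpS, fun y hy => ?_⟩
    by_contra hney
    obtain ⟨u, u', hu, hu', huu⟩ := perm_two n hn s y pS hy hpS hney
    exact two_starts_false n hn s hmod c hc hstar u u' hu hu' huu
end

section
/- Let n ≥ 4. Every IP-SEG model of the chordless cycle C_n that contains at least one interval segment has either exactly one interval arc, or exactly two interval arcs whose interval segments lie on different horizontal lines (one arc entirely on L₁ and the other entirely on L₂). In particular, an IP-SEG model of a chordless cycle cannot have more than one interval arc lying on the same horizontal line. -/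
namespace IPC
open IPSeg

noncomputable def lo (s : IPSeg) : ℝ := min s.p.1 s.q.1
noncomputable def hi (s : IPSeg) : ℝ := max s.p.1 s.q.1
noncomputable def low (s : IPSeg) : ℝ := if s.p.2 = 1 then s.p.1 else s.q.1
noncomputable def high (s : IPSeg) : ℝ := if s.p.2 = 2 then s.p.1 else s.q.1
noncomputable def permX (s : IPSeg) (y : ℝ) : ℝ := (2 - y) * low s + (y - 1) * high s

def LeftAt (z u : IPSeg) : Prop :=
  ∀ a ∈ z.carrier, ∀ b ∈ u.carrier, a.2 = b.2 → a.1 < b.1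

lemma interval_mem {s : IPSeg} (hs : s.IsInterval) {z : ℝ × ℝ} (hz : z ∈ s.carrier) :
    z.2 = s.p.2 ∧ lo s ≤ z.1 ∧ z.1 ≤ hi s := by
  rw [carrier, segment_eq_image] at hz
  obtain ⟨θ, hθ, rfl⟩ := hz
  obtain ⟨h0, h1⟩ := hθ
  have hs' : s.p.2 = s.q.2 := hs
  simp only [Prod.snd_add, Prod.fst_add, Prod.smul_snd, Prod.smul_fst, smul_eq_mul]
  refine ⟨by nlinarith, ?_, ?_⟩ <;> simp only [lo, hi] <;>
    rcases le_total s.p.1 s.q.1 with h | h <;>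
    simp [min_def, max_def, h, le_refl] <;> nlinarith

lemma interval_point {s : IPSeg} (hs : s.IsInterval) {x : ℝ} (h1 : lo s ≤ x) (h2 : x ≤ hi s) :
    ((x, s.p.2) : ℝ × ℝ) ∈ s.carrier := by
  have hx : x ∈ segment ℝ s.p.1 s.q.1 := by
    rw [segment_eq_uIcc, Set.mem_uIcc]
    simp only [lo, hi] at h1 h2
    rcases le_total s.p.1 s.q.1 with h | h
    · rw [min_eq_left h] at h1; rw [max_eq_right h] at h2; exact Or.inl ⟨h1, h2⟩
    · rw [min_eq_right h] at h1; rw [max_eq_left h] at h2; exact Or.inr ⟨h1, h2⟩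
  rw [segment_eq_image] at hx
  obtain ⟨θ, hθ, hx⟩ := hx
  rw [carrier, segment_eq_image]
  refine ⟨θ, hθ, ?_⟩
  have hs' : s.p.2 = s.q.2 := hs
  simp only [Prod.ext_iff, Prod.snd_add, Prod.fst_add, Prod.smul_snd, Prod.smul_fst, smul_eq_mul]
  constructor
  · simpa using hx
  · rw [← hs']; ring

lemma perm_carrier {s : IPSeg} (hs : s.IsPermutation) :
    s.carrier = segment ℝ (low s, 1) (high s, 2) := by
  rcases s.hp with h1 | h1 <;> rcases s.hq with h2 | h2
  · exact absurd (h1.trans h2.symm) hs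
  · rw [carrier, low, high, if_pos h1, if_neg (by rw [h1]; norm_num),
      show s.p = (s.p.1, 1) from Prod.ext rfl h1, show s.q = (s.q.1, 2) from Prod.ext rfl h2]
  · rw [carrier, low, high, if_neg (by rw [h1]; norm_num), if_pos h1,
      show s.p = (s.p.1, 2) from Prod.ext rfl h1, show s.q = (s.q.1, 1) from Prod.ext rfl h2]
    exact segment_symm ℝ _ _
  · exact absurd (h1.trans h2.symm) hs

lemma perm_mem {s : IPSeg} (hs : s.IsPermutation) {z : ℝ × ℝ} (hz : z ∈ s.carrier) :
    1 ≤ z.2 ∧ z.2 ≤ 2 ∧ z.1 = permX s z.2 := by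
  rw [perm_carrier hs, segment_eq_image] at hz
  obtain ⟨θ, ⟨h0, h1⟩, rfl⟩ := hz
  simp only [Prod.snd_add, Prod.fst_add, Prod.smul_snd, Prod.smul_fst, smul_eq_mul, permX]
  refine ⟨by nlinarith, by nlinarith, by ring⟩

lemma perm_point {s : IPSeg} (hs : s.IsPermutation) {y : ℝ} (h1 : 1 ≤ y) (h2 : y ≤ 2) :
    ((permX s y, y) : ℝ × ℝ) ∈ s.carrier := by
  rw [perm_carrier hs, segment_eq_image]
  refine ⟨y - 1, ⟨by linarith, by linarith⟩, ?_⟩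
  simp only [Prod.ext_iff, Prod.snd_add, Prod.fst_add, Prod.smul_snd, Prod.smul_fst,
    smul_eq_mul, permX]
  constructor <;> ring_nf

lemma mem_y_bounds {s : IPSeg} {z : ℝ × ℝ} (hz : z ∈ s.carrier) : 1 ≤ z.2 ∧ z.2 ≤ 2 := by
  by_cases h : s.IsInterval
  · have := (interval_mem h hz).1
    rcases s.hp with h1 | h1 <;> rw [this, h1] <;> norm_num
  · have := perm_mem h hz
    exact ⟨this.1, this.2.1⟩


lemma lo_le_hi (s : IPSeg) : lo s ≤ hi s := min_le_max

lemma perm_ivt {u v : IPSeg} (hu : u.IsPermutation) (hv : v.IsPermutation)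
    (h1 : low u ≤ low v) (h2 : high v ≤ high u) : (u.carrier ∩ v.carrier).Nonempty := by
  have hcont : ContinuousOn (fun y : ℝ => permX v y - permX u y) (Set.Icc 1 2) := by
    apply Continuous.continuousOn; unfold permX; fun_prop
  have h0 : (0 : ℝ) ∈ Set.Icc (permX v 2 - permX u 2) (permX v 1 - permX u 1) := by
    simp only [permX]; constructor <;> nlinarith
  have := intermediate_value_Icc' (by norm_num : (1:ℝ) ≤ 2) hcont h0
  obtain ⟨y, hy, hy0⟩ := this
  have hxy : permX u y = permX v y := by dsimp at hy0; linarith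
  exact ⟨(permX u y, y), perm_point hu hy.1 hy.2, by rw [hxy]; exact perm_point hv hy.1 hy.2⟩

lemma perm_left {u v : IPSeg} (hu : u.IsPermutation) (hv : v.IsPermutation)
    (h1 : low u < low v) (h2 : high u < high v) : LeftAt u v := by
  intro a ha b hb hy
  obtain ⟨ha1, ha2, ha3⟩ := perm_mem hu ha
  obtain ⟨hb1, hb2, hb3⟩ := perm_mem hv hb
  rw [ha3, hb3, ← hy]
  unfold permX
  rcases le_or_gt a.2 (3/2) with h | h
  · nlinarith [mul_lt_mul_of_pos_left h1 (by linarith : (0:ℝ) < 2 - a.2),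
      mul_le_mul_of_nonneg_left h2.le (by linarith : (0:ℝ) ≤ a.2 - 1)]
  · nlinarith [mul_le_mul_of_nonneg_left h1.le (by linarith : (0:ℝ) ≤ 2 - a.2),
      mul_lt_mul_of_pos_left h2 (by linarith : (0:ℝ) < a.2 - 1)]

lemma nonempty_comm' {A B : Set (ℝ × ℝ)} (h : (A ∩ B).Nonempty) : (B ∩ A).Nonempty := by
  obtain ⟨x, h1, h2⟩ := h; exact ⟨x, h2, h1⟩

lemma perm_perm_dichotomy {u v : IPSeg} (hu : u.IsPermutation) (hv : v.IsPermutation)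
    (hd : ¬ (u.carrier ∩ v.carrier).Nonempty) : LeftAt u v ∨ LeftAt v u := by
  have h1 : ¬(low u ≤ low v ∧ high v ≤ high u) := fun ⟨a, b⟩ => hd (perm_ivt hu hv a b)
  have h2 : ¬(low v ≤ low u ∧ high u ≤ high v) := fun ⟨a, b⟩ =>
    hd (nonempty_comm' (perm_ivt hv hu a b))
  push_neg at h1 h2
  rcases lt_trichotomy (low u) (low v) with h | h | h
  · left; exact perm_left hu hv h (h1 h.le)
  · exact absurd (h2 h.ge) (not_lt.2 (h1 h.le).le)
  · right; exact perm_left hv hu h (h2 h.le)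

lemma perm_interval_dichotomy {z u : IPSeg} (hz : z.IsPermutation) (hu : u.IsInterval)
    (hd : ¬ (z.carrier ∩ u.carrier).Nonempty) : LeftAt z u ∨ LeftAt u z := by
  have hc1 : (1:ℝ) ≤ u.p.2 := by rcases u.hp with h | h <;> rw [h] <;> norm_num
  have hc2 : u.p.2 ≤ 2 := by rcases u.hp with h | h <;> rw [h] <;> norm_num
  have hpt := perm_point hz hc1 hc2
  have hno : ¬ (lo u ≤ permX z u.p.2 ∧ permX z u.p.2 ≤ hi u) := fun ⟨a, b⟩ =>
    hd ⟨(permX z u.p.2, u.p.2), hpt, interval_point hu a b⟩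
  push_neg at hno
  rcases le_or_gt (lo u) (permX z u.p.2) with h | h
  · right
    intro a ha b hb hy
    obtain ⟨ha1, ha2, ha3⟩ := interval_mem hu ha
    obtain ⟨_, _, hb3⟩ := perm_mem hz hb
    rw [hb3, ← hy, ha1]
    exact lt_of_le_of_lt ha3 (hno h)
  · left
    intro a ha b hb hy
    obtain ⟨hb1, hb2, hb3⟩ := interval_mem hu hb
    obtain ⟨_, _, ha3⟩ := perm_mem hz ha
    rw [ha3, hy, hb1]
    exact lt_of_lt_of_le h hb2

lemma interval_interval_dichotomy {u v : IPSeg} (hu : u.IsInterval) (hv : v.IsInterval)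
    (hline : u.p.2 = v.p.2) (hd : ¬ (u.carrier ∩ v.carrier).Nonempty) :
    LeftAt u v ∨ LeftAt v u := by
  have hno : ¬ (lo v ≤ hi u ∧ lo u ≤ hi v) := by
    rintro ⟨a, b⟩
    refine hd ⟨(max (lo u) (lo v), u.p.2), interval_point hu (le_max_left _ _)
      (max_le (lo_le_hi u) a), ?_⟩
    rw [hline]
    exact interval_point hv (le_max_right _ _) (max_le b (lo_le_hi v))
  push_neg at hno
  rcases le_or_gt (lo v) (hi u) with h | h
  · right
    intro a ha b hb hy
    obtain ⟨ha1, ha2, ha3⟩ := interval_mem hv ha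
    obtain ⟨hb1, hb2, hb3⟩ := interval_mem hu hb
    exact lt_of_le_of_lt ha3 (lt_of_lt_of_le (hno h) hb2)
  · left
    intro a ha b hb hy
    obtain ⟨ha1, ha2, ha3⟩ := interval_mem hu ha
    obtain ⟨hb1, hb2, hb3⟩ := interval_mem hv hb
    exact lt_of_le_of_lt ha3 (lt_of_lt_of_le h hb2)

lemma cross {z u u' : IPSeg} {m : ℝ × ℝ} (hm : m ∈ u.carrier) (hm' : m ∈ u'.carrier)
    {x : ℝ} (hx : ((x, m.2) : ℝ × ℝ) ∈ z.carrier)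
    (h1 : LeftAt u z) (h2 : LeftAt z u') : False := by
  have := h1 m hm (x, m.2) hx rfl
  have := h2 (x, m.2) hx m hm' rfl
  simp at *; linarith

lemma step_perm {z u u' : IPSeg} (hz : z.IsPermutation)
    (hdu : ¬ (u.carrier ∩ z.carrier).Nonempty) (hdu' : ¬ (u'.carrier ∩ z.carrier).Nonempty)
    (hmeet : (u.carrier ∩ u'.carrier).Nonempty) (h : LeftAt u z) : LeftAt u' z := by
  obtain ⟨m, hm, hm'⟩ := hmeet
  obtain ⟨hy1, hy2⟩ := mem_y_bounds hm
  have hpt := perm_point hz hy1 hy2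
  have hdich : LeftAt z u' ∨ LeftAt u' z := by
    by_cases hint : u'.IsInterval
    · exact perm_interval_dichotomy hz hint (fun h => hdu' (nonempty_comm' h))
    · exact perm_perm_dichotomy hz hint (fun h => hdu' (nonempty_comm' h))
  rcases hdich with hbad | hgood
  · exact absurd (cross hm hm' hpt h hbad) id
  · exact hgood

lemma step_int_left {z u u' : IPSeg} (hz : z.IsInterval) (hu : u.IsInterval)
    (hu' : u'.IsInterval) (hlu : u.p.2 = z.p.2) (hlu' : u'.p.2 = z.p.2)
    (hdu : ¬ (u.carrier ∩ z.carrier).Nonempty) (hdu' : ¬ (u'.carrier ∩ z.carrier).Nonempty)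
    (hmeet : (u.carrier ∩ u'.carrier).Nonempty) (h : LeftAt u z) : LeftAt u' z := by
  obtain ⟨m, hm, hm'⟩ := hmeet
  have hm2 : m.2 = z.p.2 := (interval_mem hu hm).1.trans hlu
  have hpt : ((z.p.1, m.2) : ℝ × ℝ) ∈ z.carrier := by
    rw [hm2, show (z.p.1, z.p.2) = z.p from rfl]
    exact left_mem_segment ℝ z.p z.q
  have hdich : LeftAt z u' ∨ LeftAt u' z := by
    rcases interval_interval_dichotomy hz hu' hlu'.symm (fun h => hdu' (nonempty_comm' h)) with
      a | a
    · exact Or.inl a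
    · exact Or.inr a
  rcases hdich with hbad | hgood
  · exact absurd (cross hm hm' hpt h hbad) id
  · exact hgood

lemma step_int_right {z u u' : IPSeg} (hz : z.IsInterval) (hu : u.IsInterval)
    (hu' : u'.IsInterval) (hlu : u.p.2 = z.p.2) (hlu' : u'.p.2 = z.p.2)
    (hdu : ¬ (u.carrier ∩ z.carrier).Nonempty) (hdu' : ¬ (u'.carrier ∩ z.carrier).Nonempty)
    (hmeet : (u.carrier ∩ u'.carrier).Nonempty) (h : LeftAt z u) : LeftAt z u' := by
  obtain ⟨m, hm, hm'⟩ := hmeet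
  have hm2 : m.2 = z.p.2 := (interval_mem hu hm).1.trans hlu
  have hpt : ((z.p.1, m.2) : ℝ × ℝ) ∈ z.carrier := by
    rw [hm2, show (z.p.1, z.p.2) = z.p from rfl]
    exact left_mem_segment ℝ z.p z.q
  rcases interval_interval_dichotomy hz hu' hlu'.symm (fun h => hdu' (nonempty_comm' h)) with
    hgood | hbad
  · exact hgood
  · exact absurd (cross hm' hm hpt hbad h) id

lemma chain_perm_left (z : IPSeg) (hz : z.IsPermutation) (g : ℕ → IPSeg) (k : ℕ)
    (hmeet : ∀ i < k, ((g i).carrier ∩ (g (i+1)).carrier).Nonempty)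
    (hdisj : ∀ i ≤ k, ¬ ((g i).carrier ∩ z.carrier).Nonempty)
    (h0 : LeftAt (g 0) z) : LeftAt (g k) z := by
  induction k with
  | zero => exact h0
  | succ k ih =>
    exact step_perm hz (hdisj k (Nat.le_succ k)) (hdisj (k+1) le_rfl)
      (hmeet k (Nat.lt_succ_self k))
      (ih (fun i hi => hmeet i (hi.trans (Nat.lt_succ_self k)))
        (fun i hi => hdisj i (hi.trans (Nat.le_succ k))))

lemma chain_int_left (z : IPSeg) (hz : z.IsInterval) (g : ℕ → IPSeg) (k : ℕ)
    (hint : ∀ i ≤ k, (g i).IsInterval ∧ (g i).p.2 = z.p.2)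
    (hmeet : ∀ i < k, ((g i).carrier ∩ (g (i+1)).carrier).Nonempty)
    (hdisj : ∀ i ≤ k, ¬ ((g i).carrier ∩ z.carrier).Nonempty)
    (h0 : LeftAt (g 0) z) : LeftAt (g k) z := by
  induction k with
  | zero => exact h0
  | succ k ih =>
    exact step_int_left hz (hint k (Nat.le_succ k)).1 (hint (k+1) le_rfl).1
      (hint k (Nat.le_succ k)).2 (hint (k+1) le_rfl).2
      (hdisj k (Nat.le_succ k)) (hdisj (k+1) le_rfl) (hmeet k (Nat.lt_succ_self k))
      (ih (fun i hi => hint i (hi.trans (Nat.le_succ k)))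
        (fun i hi => hmeet i (hi.trans (Nat.lt_succ_self k)))
        (fun i hi => hdisj i (hi.trans (Nat.le_succ k))))

lemma chain_int_right (z : IPSeg) (hz : z.IsInterval) (g : ℕ → IPSeg) (k : ℕ)
    (hint : ∀ i ≤ k, (g i).IsInterval ∧ (g i).p.2 = z.p.2)
    (hmeet : ∀ i < k, ((g i).carrier ∩ (g (i+1)).carrier).Nonempty)
    (hdisj : ∀ i ≤ k, ¬ ((g i).carrier ∩ z.carrier).Nonempty)
    (h0 : LeftAt z (g 0)) : LeftAt z (g k) := by
  induction k with
  | zero => exact h0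
  | succ k ih =>
    exact step_int_right hz (hint k (Nat.le_succ k)).1 (hint (k+1) le_rfl).1
      (hint k (Nat.le_succ k)).2 (hint (k+1) le_rfl).2
      (hdisj k (Nat.le_succ k)) (hdisj (k+1) le_rfl) (hmeet k (Nat.lt_succ_self k))
      (ih (fun i hi => hint i (hi.trans (Nat.le_succ k)))
        (fun i hi => hmeet i (hi.trans (Nat.lt_succ_self k)))
        (fun i hi => hdisj i (hi.trans (Nat.le_succ k))))



section Graph
variable {n : ℕ} (hn : 4 ≤ n) {s : ZMod n → IPSeg}
  (hm : IsIPSEGModel (CycleGraph n) s)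

lemma zmod_ne {e e' : ℕ} (he : e < n) (he' : e' < n) (hne : e ≠ e') (v : ZMod n) :
    v + (e : ZMod n) ≠ v + (e' : ZMod n) := by
  intro h
  have h2 : (e : ZMod n) = (e' : ZMod n) := by
    have := congrArg (fun x => x - v) h
    simpa using this
  have := congrArg ZMod.val h2
  rw [ZMod.val_cast_of_lt he, ZMod.val_cast_of_lt he'] at this
  exact hne this

include hn in
lemma cycle_not_adj {e e' : ℕ} (he' : e' < n) (h1 : e + 2 ≤ e') (h2 : e' + 2 ≤ e + n)
    (v : ZMod n) : ¬ (CycleGraph n).Adj (v + (e : ZMod n)) (v + (e' : ZMod n)) := by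
  have he : e < n := by omega
  rw [CycleGraph, SimpleGraph.fromRel_adj]
  rintro ⟨hne, h | h⟩
  · have hcast : (e' : ZMod n) = ((e + 1 : ℕ) : ZMod n) := by
      have := congrArg (fun x => x - v) h
      push_cast at this ⊢
      simpa [add_comm, add_assoc, add_left_comm] using this
    have := congrArg ZMod.val hcast
    rw [ZMod.val_cast_of_lt he', ZMod.val_cast_of_lt (by omega : e + 1 < n)] at this
    omega
  · have hcast : (e : ZMod n) = ((e' + 1 : ℕ) : ZMod n) := by
      have := congrArg (fun x => x - v) h
      push_cast at this ⊢
      simpa [add_comm, add_assoc, add_left_comm] using this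
    rcases Nat.lt_or_ge (e' + 1) n with hlt | hge
    · have := congrArg ZMod.val hcast
      rw [ZMod.val_cast_of_lt he, ZMod.val_cast_of_lt hlt] at this
      omega
    · have hn' : e' + 1 = n := by omega
      rw [hn', ZMod.natCast_self] at hcast
      have := congrArg ZMod.val hcast
      rw [ZMod.val_cast_of_lt he, ZMod.val_zero] at this
      omega

include hn hm in
lemma meet_succ (v : ZMod n) : ((s v).carrier ∩ (s (v + 1)).carrier).Nonempty := by
  have hne : v ≠ v + 1 := by
    have := zmod_ne (by omega : 0 < n) (by omega : 1 < n) (by omega) v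
    simpa using this
  refine (hm v (v + 1) hne).mp ?_
  rw [CycleGraph, SimpleGraph.fromRel_adj]
  exact ⟨hne, Or.inl rfl⟩

include hn hm in
lemma disj_of {e e' : ℕ} (he' : e' < n) (h1 : e + 2 ≤ e') (h2 : e' + 2 ≤ e + n) (v : ZMod n) :
    ¬ ((s (v + (e : ZMod n))).carrier ∩ (s (v + (e' : ZMod n))).carrier).Nonempty := by
  intro H
  have hne := zmod_ne (by omega : e < n) he' (by omega) v
  exact cycle_not_adj hn he' h1 h2 v ((hm _ _ hne).mpr H)

include hn hm in
lemma line_step (v : ZMod n) (h1 : (s v).IsInterval) (h2 : (s (v + 1)).IsInterval) :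
    (s (v + 1)).p.2 = (s v).p.2 := by
  obtain ⟨m, hm1, hm2⟩ := meet_succ hn hm v
  rw [← (interval_mem h2 hm2).1, ← (interval_mem h1 hm1).1]


include hn hm in
lemma no_all_interval (hall : ∀ v : ZMod n, (s v).IsInterval) : False := by
  haveI : NeZero n := ⟨by omega⟩
  obtain ⟨u, hu⟩ := Finite.exists_max (fun v : ZMod n => lo (s v))
  obtain ⟨m1, hm1a, hm1b⟩ := meet_succ hn hm (u - 1)
  obtain ⟨m2, hm2a, hm2b⟩ := meet_succ hn hm u
  rw [sub_add_cancel] at hm1b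
  have key : ¬ (((s (u - 1)).carrier) ∩ ((s (u + 1)).carrier)).Nonempty := by
    have := disj_of hn hm (by omega : 2 < n) (by omega : 0 + 2 ≤ 2)
      (by omega : 2 + 2 ≤ 0 + n) (u - 1)
    have e0 : u - 1 + ((0 : ℕ) : ZMod n) = u - 1 := by push_cast; ring
    have e2 : u - 1 + ((2 : ℕ) : ZMod n) = u + 1 := by push_cast; ring
    rwa [e0, e2] at this
  apply key
  -- common point (lo (s u), line)
  have h1 := interval_mem (hall (u - 1)) hm1a
  have h2 := interval_mem (hall u) hm1b
  have h3 := interval_mem (hall u) hm2a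
  have h4 := interval_mem (hall (u + 1)) hm2b
  have l1 : (s (u - 1)).p.2 = (s u).p.2 := by rw [← h1.1, h2.1]
  have l2 : (s (u + 1)).p.2 = (s u).p.2 := by rw [← h4.1, h3.1]
  refine ⟨(lo (s u), (s u).p.2), ?_, ?_⟩
  · have := interval_point (hall (u - 1)) (x := lo (s u))
      (hu (u - 1)) (le_trans h2.2.1 h1.2.2)
    rwa [l1] at this
  · have := interval_point (hall (u + 1)) (x := lo (s u))
      (hu (u + 1)) (le_trans h3.2.1 h4.2.2)
    rwa [l2] at this


lemma vsub1 (hn1 : 1 ≤ n) (v : ZMod n) : v - 1 = v + ((n - 1 : ℕ) : ZMod n) := by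
  have : ((n - 1 : ℕ) : ZMod n) = (n : ℕ) - 1 := by push_cast [Nat.cast_sub hn1]; ring
  rw [this, ZMod.natCast_self]; ring

lemma fsucc (v : ZMod n) (a : ℕ) : v + (a : ZMod n) + 1 = v + ((a + 1 : ℕ) : ZMod n) := by
  push_cast; ring

include hn hm in
lemma meet_f (v : ZMod n) (a : ℕ) :
    ((s (v + (a : ZMod n))).carrier ∩ (s (v + ((a + 1 : ℕ) : ZMod n))).carrier).Nonempty := by
  have := meet_succ hn hm (v + (a : ZMod n))
  rwa [fsucc] at this

include hn hm in
lemma exists_perm : ∃ p : ZMod n, (s p).IsPermutation := by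
  by_contra h
  push_neg at h
  exact no_all_interval hn hm (fun v => not_not.1 (h v))

include hn hm in
lemma exists_arc_start (i : ZMod n) (hi : (s i).IsInterval) : ∃ v, IntArcStart n s v := by
  classical
  haveI : NeZero n := ⟨by omega⟩
  obtain ⟨p, hp⟩ := exists_perm hn hm
  have hex : ∃ k : ℕ, ¬ (s (i - (k : ZMod n))).IsInterval := by
    refine ⟨(i - p).val, ?_⟩
    have : i - (((i - p).val : ℕ) : ZMod n) = p := by
      rw [ZMod.natCast_val, ZMod.cast_id]; ring
    rw [this]; exact hp
  set k0 := Nat.find hex with hk0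
  have hk0pos : 1 ≤ k0 := by
    rcases Nat.eq_zero_or_pos k0 with h | h
    · exfalso; have := Nat.find_spec hex; rw [← hk0, h] at this; simp at this; exact this hi
    · exact h
  refine ⟨i - ((k0 - 1 : ℕ) : ZMod n), ?_, ?_⟩
  · have := Nat.find_min hex (by omega : k0 - 1 < k0)
    exact not_not.1 this
  · have heq : i - ((k0 - 1 : ℕ) : ZMod n) - 1 = i - (k0 : ZMod n) := by
      have : ((k0 : ℕ) : ZMod n) = ((k0 - 1 : ℕ) : ZMod n) + 1 := by
        push_cast [Nat.cast_sub hk0pos]; ring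
      rw [this]; ring
    rw [heq]; exact Nat.find_spec hex

include hn hm in
lemma arc_line {v : ZMod n} {l : ℕ} (harc : ∀ k < l, (s (v + (k : ZMod n))).IsInterval) :
    ∀ k < l, (s (v + (k : ZMod n))).p.2 = (s v).p.2 := by
  intro k hk
  induction k with
  | zero => simp
  | succ k ih =>
    have h1 : (s (v + (k : ZMod n))).IsInterval := harc k (by omega)
    have h2 : (s (v + (k : ZMod n) + 1)).IsInterval := by
      rw [fsucc]; exact harc (k + 1) hk
    have := line_step hn hm (v + (k : ZMod n)) h1 h2
    rw [fsucc] at this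
    rw [this, ih (by omega)]


include hn hm in
lemma crux_aux {v w : ZMod n} (hvw : v ≠ w) (hv : IntArcStart n s v)
    (hw : IntArcStart n s w) (hline : (s v).p.2 = (s w).p.2)
    (hLR : LeftAt (s v) (s w)) : False := by
  classical
  haveI : NeZero n := ⟨by omega⟩
  set c := (s v).p.2 with hc
  -- distance d
  set d := (w - v).val with hdd
  have hwd : w = v + (d : ZMod n) := by
    rw [hdd, ZMod.natCast_val, ZMod.cast_id]; ring
  have hdn : d < n := ZMod.val_lt _
  have hdpos : 0 < d := by
    rcases Nat.eq_zero_or_pos d with h | h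
    · exfalso
      have h0 : w - v = 0 := (ZMod.val_eq_zero _).mp (by rw [← hdd, h])
      exact hvw (sub_eq_zero.mp h0).symm
    · exact h
  -- arc of v
  have hexv : ∃ k : ℕ, ¬ (s (v + (k : ZMod n))).IsInterval := by
    refine ⟨n - 1, ?_⟩
    rw [← vsub1 (by omega)]; exact hv.2
  set l := Nat.find hexv with hl
  have hnotl : ¬ (s (v + (l : ZMod n))).IsInterval := Nat.find_spec hexv
  have harcv : ∀ k < l, (s (v + (k : ZMod n))).IsInterval :=
    fun k hk => not_not.1 (Nat.find_min hexv hk)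
  have hl1 : 1 ≤ l := by
    rcases Nat.eq_zero_or_pos l with h | h
    · exfalso; rw [h] at hnotl; simp at hnotl; exact hnotl hv.1
    · exact h
  have hlinev : ∀ k < l, (s (v + (k : ZMod n))).p.2 = c := fun k hk =>
    arc_line hn hm harcv k hk
  -- arc of w
  have hexw : ∃ k : ℕ, ¬ (s (w + (k : ZMod n))).IsInterval := by
    refine ⟨n - 1, ?_⟩
    rw [← vsub1 (by omega)]; exact hw.2
  set l' := Nat.find hexw with hl'
  have hnotl' : ¬ (s (w + (l' : ZMod n))).IsInterval := Nat.find_spec hexw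
  have harcw : ∀ k < l', (s (w + (k : ZMod n))).IsInterval :=
    fun k hk => not_not.1 (Nat.find_min hexw hk)
  have hl'1 : 1 ≤ l' := by
    rcases Nat.eq_zero_or_pos l' with h | h
    · exfalso; rw [h] at hnotl'; simp at hnotl'; exact hnotl' hw.1
    · exact h
  have hlinew : ∀ k < l', (s (w + (k : ZMod n))).p.2 = c := fun k hk =>
    (arc_line hn hm harcw k hk).trans hline.symm
  -- transfer w-indexing to v-indexing
  have fwd : ∀ k : ℕ, w + (k : ZMod n) = v + ((d + k : ℕ) : ZMod n) := by
    intro k; rw [hwd]; push_cast; ring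
  have hqidx : w - 1 = v + ((d - 1 : ℕ) : ZMod n) := by
    rw [hwd]
    have : ((d : ℕ) : ZMod n) = ((d - 1 : ℕ) : ZMod n) + 1 := by
      push_cast [Nat.cast_sub hdpos]; ring
    rw [this]; ring
  have hpermq : ¬ (s (v + ((d - 1 : ℕ) : ZMod n))).IsInterval := by
    rw [← hqidx]; exact hw.2
  -- l < d
  have hld : l < d := by
    rcases Nat.lt_trichotomy l d with h | h | h
    · exact h
    · exfalso; apply hnotl; rw [h, ← hwd]; exact hw.1
    · exfalso
      exact hpermq (harcv (d - 1) (by omega))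
  -- d + l' ≤ n - 1
  have hdl' : d + l' ≤ n - 1 := by
    have hl'n : l' ≤ n - 1 := Nat.find_min' hexw (by rw [← vsub1 (by omega)]; exact hw.2)
    by_contra hcon
    push_neg at hcon
    have hk1 : n - d ≤ l' := by omega
    rcases Nat.lt_or_ge (n - d) l' with hlt | hge
    · -- v - 1 inside w's arc
      apply hv.2
      have := harcw (n - d - 1) (by omega)
      have heq : w + ((n - d - 1 : ℕ) : ZMod n) = v - 1 := by
        rw [hwd]
        have : ((d : ℕ) : ZMod n) + ((n - d - 1 : ℕ) : ZMod n) = ((n - 1 : ℕ) : ZMod n) := by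
          rw [← Nat.cast_add]; congr 1; omega
        rw [add_assoc, this, ← vsub1 (by omega)]
      rwa [heq] at this
    · -- l' = n - d : s v not interval
      have hl'eq : l' = n - d := by omega
      apply hnotl'
      rw [hl'eq]
      have heq : w + ((n - d : ℕ) : ZMod n) = v := by
        rw [hwd]
        have : ((d : ℕ) : ZMod n) + ((n - d : ℕ) : ZMod n) = ((n : ℕ) : ZMod n) := by
          rw [← Nat.cast_add]; congr 1; omega
        rw [add_assoc, this, ZMod.natCast_self, add_zero]
      rw [heq]
      exact hv.1
  have hd2 : 2 ≤ d := by omega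
  have hpermr : ¬ (s (v + (l : ZMod n))).IsInterval := hnotl
  have hpermr' : ¬ (s (v + ((d + l' : ℕ) : ZMod n))).IsInterval := by
    rw [← fwd]; exact hnotl'
  have hpermq' : ¬ (s (v + ((n - 1 : ℕ) : ZMod n))).IsInterval := by
    rw [← vsub1 (by omega)]; exact hv.2
  have hf0 : v + ((0 : ℕ) : ZMod n) = v := by simp
  have hfd : v + ((d : ℕ) : ZMod n) = w := hwd.symm
  -- generic disjointness in v-coordinates
  have disjf : ∀ a b : ℕ, b < n → a + 2 ≤ b → b + 2 ≤ a + n →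
      ¬ ((s (v + (a : ZMod n))).carrier ∩ (s (v + (b : ZMod n))).carrier).Nonempty :=
    fun a b hb h1 h2 => disj_of hn hm hb h1 h2 v
  have disjf' : ∀ a b : ℕ, b < n → a + 2 ≤ b → b + 2 ≤ a + n →
      ¬ ((s (v + (b : ZMod n))).carrier ∩ (s (v + (a : ZMod n))).carrier).Nonempty :=
    fun a b hb h1 h2 H => disjf a b hb h1 h2 (nonempty_comm' H)
  -- lines in v-coordinates for w's arc
  have hlinew' : ∀ k < l', (s (v + ((d + k : ℕ) : ZMod n))).IsInterval ∧
      (s (v + ((d + k : ℕ) : ZMod n))).p.2 = c := by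
    intro k hk
    constructor
    · rw [← fwd]; exact harcw k hk
    · rw [← fwd]; exact hlinew k hk
  -- ordering of the two arcs: every interval of v's arc is left of every interval of w's arc
  have ordi : ∀ i < l, LeftAt (s (v + (i : ZMod n))) (s (v + ((d : ℕ) : ZMod n))) := by
    intro i hi
    have hzint : (s (v + ((d : ℕ) : ZMod n))).IsInterval := by rw [hfd]; exact hw.1
    have hzline : (s (v + ((d : ℕ) : ZMod n))).p.2 = c := by
      have := hlinew' 0 (by omega); simpa using this.2
    refine chain_int_left _ hzint (fun t => s (v + (t : ZMod n))) i ?_ ?_ ?_ ?_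
    · intro t ht
      exact ⟨harcv t (by omega), (hlinev t (by omega)).trans hzline.symm⟩
    · intro t ht; exact meet_f hn hm v t
    · intro t ht
      exact disjf t d hdn (by omega) (by omega)
    · have hbase : LeftAt (s (v + ((0 : ℕ) : ZMod n))) (s (v + ((d : ℕ) : ZMod n))) := by
        rw [hf0, hfd]; exact hLR
      exact hbase
  have ordij : ∀ i < l, ∀ j < l',
      LeftAt (s (v + (i : ZMod n))) (s (v + ((d + j : ℕ) : ZMod n))) := by
    intro i hi j hj
    have hzint : (s (v + (i : ZMod n))).IsInterval := harcv i hi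
    refine chain_int_right _ hzint (fun t => s (v + ((d + t : ℕ) : ZMod n))) j ?_ ?_ ?_ ?_
    · intro t ht
      exact ⟨(hlinew' t (by omega)).1, (hlinew' t (by omega)).2.trans (hlinev i hi).symm⟩
    · intro t ht
      have := meet_f hn hm v (d + t)
      have heq : d + t + 1 = d + (t + 1) := by omega
      rwa [heq] at this
    · intro t ht
      exact disjf' i (d + t) (by omega) (by omega) (by omega)
    · have := ordi i hi
      have heq : (d : ℕ) + 0 = d := by omega
      rwa [← heq] at this
  -- c is a genuine line value
  have hc12 : (1:ℝ) ≤ c ∧ c ≤ 2 := by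
    rcases (s v).hp with h | h <;> rw [hc, h] <;> norm_num
  -- the four boundary permutation x-coordinates
  -- m_q' : between f(n-1) and f 0 = v
  obtain ⟨mq', hmq'1, hmq'2⟩ := by
    have := meet_f hn hm v (n - 1)
    have heq : (n - 1) + 1 = n := by omega
    rw [heq, ZMod.natCast_self, add_zero] at this
    exact this
  have hq'line := interval_mem hv.1 hmq'2
  have haq'1 : lo (s v) ≤ mq'.1 := hq'line.2.1
  have haq'2 : mq'.1 ≤ hi (s v) := hq'line.2.2
  have haq'x : mq'.1 = permX (s (v + ((n - 1 : ℕ) : ZMod n))) c := by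
    have := (perm_mem hpermq' hmq'1).2.2
    rw [this, hq'line.1]
  -- m_q : between f(d-1) and f d = w
  obtain ⟨mq, hmq1, hmq2⟩ := by
    have := meet_f hn hm v (d - 1)
    have heq : (d - 1) + 1 = d := by omega
    rw [heq] at this
    exact this
  have hwint : (s (v + ((d : ℕ) : ZMod n))).IsInterval := by rw [hfd]; exact hw.1
  have hwline : (s (v + ((d : ℕ) : ZMod n))).p.2 = c := by
    have := hlinew' 0 (by omega); simpa using this.2
  have hqline := interval_mem hwint hmq2
  have haq1 : lo (s (v + ((d : ℕ) : ZMod n))) ≤ mq.1 := hqline.2.1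
  have haq2 : mq.1 ≤ hi (s (v + ((d : ℕ) : ZMod n))) := hqline.2.2
  have haqx : mq.1 = permX (s (v + ((d - 1 : ℕ) : ZMod n))) c := by
    have := (perm_mem hpermq hmq1).2.2
    rw [this, hqline.1, hwline]
  -- m_r : between f(l-1) and f l
  obtain ⟨mr, hmr1, hmr2⟩ := by
    have := meet_f hn hm v (l - 1)
    have heq : (l - 1) + 1 = l := by omega
    rw [heq] at this
    exact this
  have hrline := interval_mem (harcv (l - 1) (by omega)) hmr1
  have harx : mr.1 = permX (s (v + (l : ZMod n))) c := by
    have := (perm_mem hpermr hmr2).2.2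
    rw [this, hrline.1, hlinev (l - 1) (by omega)]
  -- m_r' : between f(d + l' - 1) and f (d + l')
  obtain ⟨mr', hmr'1, hmr'2⟩ := by
    have := meet_f hn hm v (d + l' - 1)
    have heq : (d + l' - 1) + 1 = d + l' := by omega
    rw [heq] at this
    exact this
  have hr'arc : (s (v + ((d + l' - 1 : ℕ) : ZMod n))).IsInterval ∧
      (s (v + ((d + l' - 1 : ℕ) : ZMod n))).p.2 = c := by
    have := hlinew' (l' - 1) (by omega)
    have heq : d + (l' - 1) = d + l' - 1 := by omega
    rwa [heq] at this
  have hr'line := interval_mem hr'arc.1 hmr'1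
  have har'x : mr'.1 = permX (s (v + ((d + l' : ℕ) : ZMod n))) c := by
    have := (perm_mem hpermr' hmr'2).2.2
    rw [this, hr'line.1, hr'arc.2]
  -- membership of boundary x-coordinates as points on line c
  have hptq' : ((mq'.1, c) : ℝ × ℝ) ∈ (s (v + ((n - 1 : ℕ) : ZMod n))).carrier := by
    rw [haq'x]; exact perm_point hpermq' hc12.1 hc12.2
  have hptq : ((mq.1, c) : ℝ × ℝ) ∈ (s (v + ((d - 1 : ℕ) : ZMod n))).carrier := by
    rw [haqx]; exact perm_point hpermq hc12.1 hc12.2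
  have hptr : ((mr.1, c) : ℝ × ℝ) ∈ (s (v + (l : ZMod n))).carrier := by
    rw [harx]; exact perm_point hpermr hc12.1 hc12.2
  have hptr' : ((mr'.1, c) : ℝ × ℝ) ∈ (s (v + ((d + l' : ℕ) : ZMod n))).carrier := by
    rw [har'x]; exact perm_point hpermr' hc12.1 hc12.2
  have hptq'v : ((mq'.1, c) : ℝ × ℝ) ∈ (s v).carrier := by
    have := interval_point hv.1 haq'1 haq'2
    rwa [← hc] at this
  have hptqw : ((mq.1, c) : ℝ × ℝ) ∈ (s (v + ((d : ℕ) : ZMod n))).carrier := by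
    have := interval_point hwint haq1 haq2
    rwa [hwline] at this
  have hptrv : ((mr.1, c) : ℝ × ℝ) ∈ (s (v + ((l - 1 : ℕ) : ZMod n))).carrier := by
    have := interval_point (harcv (l - 1) (by omega)) hrline.2.1 hrline.2.2
    rwa [hlinev (l - 1) (by omega)] at this
  have hptr'w : ((mr'.1, c) : ℝ × ℝ) ∈ (s (v + ((d + l' - 1 : ℕ) : ZMod n))).carrier := by
    have := interval_point hr'arc.1 hr'line.2.1 hr'line.2.2
    rwa [hr'arc.2] at this
  -- base 1 : q' is left of q
  have base1 : LeftAt (s (v + ((n - 1 : ℕ) : ZMod n))) (s (v + ((d - 1 : ℕ) : ZMod n))) := by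
    have hdisj := disjf (d - 1) (n - 1) (by omega) (by omega) (by omega)
    rcases perm_perm_dichotomy hpermq' hpermq (fun H => hdisj (nonempty_comm' H)) with h | h
    · exact h
    · exfalso
      have h1 : mq.1 < mq'.1 := h (mq.1, c) hptq (mq'.1, c) hptq' rfl
      have h2 : mq'.1 < mq.1 := by
        have hord := ordi 0 (by omega)
        rw [Nat.cast_zero, add_zero] at hord
        exact hord (mq'.1, c) hptq'v (mq.1, c) hptqw rfl
      linarith
  -- chain 1 : propagate around the back path to r'
  have hchain1 : LeftAt (s (v + ((d + l' : ℕ) : ZMod n))) (s (v + ((d - 1 : ℕ) : ZMod n))) := by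
    have := chain_perm_left (s (v + ((d - 1 : ℕ) : ZMod n))) hpermq
      (fun t => s (v + ((n - 1 - t : ℕ) : ZMod n))) (n - 1 - (d + l'))
      (fun t ht => by
        have := meet_f hn hm v (n - 2 - t)
        have h1 : n - 2 - t + 1 = n - 1 - t := by omega
        rw [h1] at this
        have h2 : n - 2 - t = n - 1 - (t + 1) := by omega
        rw [h2] at this
        exact nonempty_comm' this)
      (fun t ht => disjf' (d - 1) (n - 1 - t) (by omega) (by omega) (by omega))
      base1
    have hk : n - 1 - (n - 1 - (d + l')) = d + l' := by omega
    beta_reduce at this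
    rwa [hk] at this
  have hfact1 : mr'.1 < mq.1 := hchain1 (mr'.1, c) hptr' (mq.1, c) hptq rfl
  -- base 2 : r is left of r'
  have base2 : LeftAt (s (v + (l : ZMod n))) (s (v + ((d + l' : ℕ) : ZMod n))) := by
    have hdisj := disjf l (d + l') (by omega) (by omega) (by omega)
    rcases perm_perm_dichotomy hpermr hpermr' hdisj with h | h
    · exact h
    · exfalso
      have h1 : mr'.1 < mr.1 := h (mr'.1, c) hptr' (mr.1, c) hptr rfl
      have h2 : mr.1 < mr'.1 := by
        have hord := ordij (l - 1) (by omega) (l' - 1) (by omega)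
        have heq : d + (l' - 1) = d + l' - 1 := by omega
        rw [heq] at hord
        exact hord (mr.1, c) hptrv (mr'.1, c) hptr'w rfl
      linarith
  -- chain 2 : propagate along the forward gap to q
  have hchain2 : LeftAt (s (v + ((d - 1 : ℕ) : ZMod n))) (s (v + ((d + l' : ℕ) : ZMod n))) := by
    have := chain_perm_left (s (v + ((d + l' : ℕ) : ZMod n))) hpermr'
      (fun t => s (v + ((l + t : ℕ) : ZMod n))) (d - 1 - l)
      (fun t ht => by
        have := meet_f hn hm v (l + t)
        have h1 : l + t + 1 = l + (t + 1) := by omega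
        rwa [h1] at this)
      (fun t ht => disjf (l + t) (d + l') (by omega) (by omega) (by omega))
      base2
    have hk : l + (d - 1 - l) = d - 1 := by omega
    beta_reduce at this
    rwa [hk] at this
  have hfact2 : mq.1 < mr'.1 := hchain2 (mq.1, c) hptq (mr'.1, c) hptr' rfl
  linarith


include hn hm in
lemma crux {v w : ZMod n} (hvw : v ≠ w) (hv : IntArcStart n s v)
    (hw : IntArcStart n s w) (hline : (s v).p.2 = (s w).p.2) : False := by
  have hnadj : ¬ (CycleGraph n).Adj v w := by
    rw [CycleGraph, SimpleGraph.fromRel_adj]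
    rintro ⟨-, h | h⟩
    · exact hw.2 (by rw [h, add_sub_cancel_right]; exact hv.1)
    · exact hv.2 (by rw [h, add_sub_cancel_right]; exact hw.1)
  have hdisj : ¬ ((s v).carrier ∩ (s w).carrier).Nonempty :=
    fun H => hnadj ((hm v w hvw).mpr H)
  rcases interval_interval_dichotomy hv.1 hw.1 hline hdisj with h | h
  · exact crux_aux hn hm hvw hv hw hline h
  · exact crux_aux hn hm hvw.symm hw hv hline.symm h

end Graph
end IPC


/-- Every IP-SEG model of a chordless cycle `C_n` (`n ≥ 4`) containing at least one
interval segment has either exactly one interval arc, or exactly two interval arcs,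
each lying entirely on one horizontal line, and on different lines. In particular such
a model cannot have two interval arcs on the same horizontal line. -/
theorem ipseg_cycle_interval_arcs (n : ℕ) (hn : 4 ≤ n)
    (s : ZMod n → IPSeg) (hm : IsIPSEGModel (CycleGraph n) s)
    (hint : ∃ v : ZMod n, (s v).IsInterval) :
    (∃! v : ZMod n, IntArcStart n s v) ∨
    (∃ (v w : ZMod n) (lv lw : ℕ), v ≠ w ∧
      IntArcStart n s v ∧ IntArcLen n s v lv ∧
      IntArcStart n s w ∧ IntArcLen n s w lw ∧
      (∀ u : ZMod n, IntArcStart n s u → u = v ∨ u = w) ∧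
      (∀ k : ℕ, k < lv → (s (v + (k : ZMod n))).p.2 = (s v).p.2) ∧
      (∀ k : ℕ, k < lw → (s (w + (k : ZMod n))).p.2 = (s w).p.2) ∧
      (s v).p.2 ≠ (s w).p.2) := by

  classical
  haveI : NeZero n := ⟨by omega⟩
  obtain ⟨i, hi⟩ := hint
  obtain ⟨v, hv⟩ := IPC.exists_arc_start hn hm i hi
  have mkLen : ∀ u : ZMod n, IntArcStart n s u → ∃ lu : ℕ, IntArcLen n s u lu ∧
      (∀ k : ℕ, k < lu → (s (u + (k : ZMod n))).p.2 = (s u).p.2) := by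
    intro u hu
    have hex : ∃ k : ℕ, ¬ (s (u + (k : ZMod n))).IsInterval :=
      ⟨n - 1, by rw [← IPC.vsub1 (by omega)]; exact hu.2⟩
    refine ⟨Nat.find hex, ⟨fun k hk => not_not.1 (Nat.find_min hex hk), Nat.find_spec hex⟩, ?_⟩
    exact IPC.arc_line hn hm (fun k hk => not_not.1 (Nat.find_min hex hk))
  by_cases hcase : ∃ w, IntArcStart n s w ∧ w ≠ v
  · obtain ⟨w, hw, hwv⟩ := hcase
    obtain ⟨lv, hlv, hclv⟩ := mkLen v hv
    obtain ⟨lw, hlw, hclw⟩ := mkLen w hw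
    have hlines : (s v).p.2 ≠ (s w).p.2 := fun h => IPC.crux hn hm hwv.symm hv hw h
    right
    refine ⟨v, w, lv, lw, hwv.symm, hv, hlv, hw, hlw, ?_, hclv, hclw, hlines⟩
    intro u hu
    by_contra hne
    push_neg at hne
    obtain ⟨hne1, hne2⟩ := hne
    have htri : (s u).p.2 = (s v).p.2 ∨ (s u).p.2 = (s w).p.2 := by
      rcases (s u).hp with a1 | a1 <;> rcases (s v).hp with b1 | b1 <;>
        rcases (s w).hp with c1 | c1
      all_goals first
        | exact Or.inl (a1.trans b1.symm)
        | exact Or.inr (a1.trans c1.symm)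
        | exact absurd (b1.trans c1.symm) hlines
    rcases htri with h | h
    · exact IPC.crux hn hm hne1 hu hv h
    · exact IPC.crux hn hm hne2 hu hw h
  · left
    refine ⟨v, hv, fun u hu => ?_⟩
    by_contra hne
    exact hcase ⟨u, hu, hne⟩
end

section
/- Let G be a finite simple graph with an IP-SEG model v ↦ s(v), and let C be a clique of G such that the set C_int of vertices of C assigned interval segments is nonempty. Then: (1) all interval segments {s(v) : v ∈ C_int} lie on the same horizontal line Lᵢ; (2) the intersection ⋂_{v ∈ C_int} s(v) is nonempty; and (3) for every vertex w ∈ C assigned a permutation segment, the endpoint of s(w) lying on Lᵢ belongs to ⋂_{v ∈ C_int} s(v). -/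
lemma mem_segment_prod {p q x : ℝ × ℝ} :
    x ∈ segment ℝ p q ↔ ∃ a b : ℝ, 0 ≤ a ∧ 0 ≤ b ∧ a + b = 1 ∧
      a * p.1 + b * q.1 = x.1 ∧ a * p.2 + b * q.2 = x.2 := by
  constructor
  · rintro ⟨a, b, ha, hb, hab, rfl⟩
    exact ⟨a, b, ha, hb, hab, rfl, rfl⟩
  · rintro ⟨a, b, ha, hb, hab, h1, h2⟩
    exact ⟨a, b, ha, hb, hab, Prod.ext h1 h2⟩

lemma interval_mem_carrier {t : IPSeg} (h : t.IsInterval) {x : ℝ × ℝ} :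
    x ∈ t.carrier ↔ x.2 = t.p.2 ∧ x.1 ∈ Set.uIcc t.p.1 t.q.1 := by
  rw [IPSeg.carrier, mem_segment_prod, ← segment_eq_uIcc]
  constructor
  · rintro ⟨a, b, ha, hb, hab, h1, h2⟩
    refine ⟨?_, a, b, ha, hb, hab, h1⟩
    have := h
    rw [IPSeg.IsInterval] at this
    linear_combination -h2 - b*this + t.p.2*hab
  · rintro ⟨h2, a, b, ha, hb, hab, h1⟩
    refine ⟨a, b, ha, hb, hab, h1, ?_⟩
    have := h
    rw [IPSeg.IsInterval] at this
    linear_combination -h2 + t.p.2*hab - b*this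

lemma seg_endpoint {p q z : ℝ × ℝ} (hz : z ∈ segment ℝ p q) (h2 : z.2 = p.2)
    (hne : p.2 ≠ q.2) : z = p := by
  obtain ⟨a, b, ha, hb, hab, h1, hy⟩ := mem_segment_prod.mp hz
  have hb0 : b * (q.2 - p.2) = 0 := by linear_combination hy + h2 - p.2*hab
  have : b = 0 := by
    rcases mul_eq_zero.mp hb0 with h | h
    · exact h
    · exact absurd (by linarith : p.2 = q.2) hne
  subst this
  have ha1 : a = 1 := by linarith
  subst ha1
  exact Prod.ext (by linarith) (by linarith)

/-- Let `C` be a clique of a graph with an IP-SEG model such that some vertex of `C` is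
assigned an interval segment. Then all interval segments of `C` lie on one horizontal
line `y = c`, they have a common point, and for every vertex of `C` assigned a
permutation segment, its endpoint on the line `y = c` lies in that common intersection. -/
theorem clique_interval_structure {V : Type} [Fintype V] (G : SimpleGraph V)
    (s : V → IPSeg) (hm : IsIPSEGModel G s) (C : Set V) (hC : G.IsClique C)
    (hne : ∃ v ∈ C, (s v).IsInterval) :
    ∃ c : ℝ, (c = 1 ∨ c = 2) ∧
      (∀ v ∈ C, (s v).IsInterval → (s v).p.2 = c ∧ (s v).q.2 = c) ∧
      (⋂ v ∈ {v ∈ C | (s v).IsInterval}, (s v).carrier).Nonempty ∧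
      (∀ w ∈ C, (s w).IsPermutation → ∀ e ∈ (s w).endpoints, e.2 = c →
        e ∈ ⋂ v ∈ {v ∈ C | (s v).IsInterval}, (s v).carrier) := by
  obtain ⟨v₀, hv₀C, hv₀I⟩ := hne
  set c : ℝ := (s v₀).p.2 with hc_def
  -- the carriers of two clique interval vertices intersect (trivially if equal)
  have hmeet : ∀ u ∈ C, ∀ v ∈ C, ((s u).carrier ∩ (s v).carrier).Nonempty := by
    intro u hu v hv
    by_cases huv : u = v
    · subst huv
      exact ⟨(s u).p, left_mem_segment ℝ _ _, left_mem_segment ℝ _ _⟩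
    · exact (hm u v huv).mp (hC hu hv huv)
  -- all interval segments of C lie on line y = c
  have hline : ∀ v ∈ C, (s v).IsInterval → (s v).p.2 = c := by
    intro v hv hvI
    obtain ⟨z, hz₀, hzv⟩ := hmeet v₀ hv₀C v hv
    have h1 := ((interval_mem_carrier hv₀I).mp hz₀).1
    have h2 := ((interval_mem_carrier hvI).mp hzv).1
    rw [← h2, h1]
  refine ⟨c, (s v₀).hp, ?_, ?_, ?_⟩
  · intro v hv hvI
    exact ⟨hline v hv hvI, (hline v hv hvI) ▸ hvI.symm⟩
  · -- Helly in dimension 1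
    have hfin : {v ∈ C | (s v).IsInterval}.Finite := Set.toFinite _
    set T : Finset V := hfin.toFinset with hT_def
    have hT : T.Nonempty := ⟨v₀, by simp [hT_def, hv₀C, hv₀I]⟩
    have hmemT : ∀ v ∈ T, v ∈ C ∧ (s v).IsInterval := by
      intro v hv; simpa [hT_def] using hv
    set f : V → ℝ := fun v => (s v).p.1 ⊓ (s v).q.1 with hf
    set g : V → ℝ := fun v => (s v).p.1 ⊔ (s v).q.1 with hg
    have hpair : ∀ u ∈ T, ∀ v ∈ T, f u ≤ g v := by
      intro u hu v hv
      obtain ⟨huC, huI⟩ := hmemT u hu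
      obtain ⟨hvC, hvI⟩ := hmemT v hv
      obtain ⟨z, hzu, hzv⟩ := hmeet u huC v hvC
      have h1 := ((interval_mem_carrier huI).mp hzu).2
      have h2 := ((interval_mem_carrier hvI).mp hzv).2
      rw [Set.uIcc] at h1 h2
      exact le_trans h1.1 h2.2
    set x : ℝ := T.sup' hT f with hx
    refine ⟨(x, c), ?_⟩
    simp only [Set.mem_iInter, Set.mem_setOf_eq]
    rintro v ⟨hvC, hvI⟩
    have hvT : v ∈ T := by simp [hT_def, hvC, hvI]
    refine (interval_mem_carrier hvI).mpr ⟨(hline v hvC hvI).symm, ?_⟩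
    rw [Set.uIcc]
    exact ⟨Finset.le_sup' f hvT, Finset.sup'_le hT f fun u hu => hpair u hu v hvT⟩
  · intro w hwC hwP e he hec
    simp only [Set.mem_iInter, Set.mem_setOf_eq]
    rintro v ⟨hvC, hvI⟩
    have hwv : w ≠ v := by
      rintro rfl; exact hwP hvI
    obtain ⟨z, hzw, hzv⟩ := hmeet w hwC v hvC
    have hz2 : z.2 = c := by
      rw [((interval_mem_carrier hvI).mp hzv).1, hline v hvC hvI]
    have hze : z = e := by
      rcases he with he | he
      · subst he
        exact seg_endpoint hzw (hz2.trans hec.symm) hwP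
      · subst he
        have : z ∈ segment ℝ (s w).q (s w).p := by
          rw [segment_symm]; exact hzw
        exact seg_endpoint this (by rw [hz2, hec]) (Ne.symm hwP)
    rwa [← hze]
end
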